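/- arXiv:1106.3318 — 5 statements merged into one kernel-verified Lean document; each statement's English description precedes it below -/
import Mathlib

section
/- Every Peano continuum (with a fixed compatible metric) is uniformly locally arcwise connected: for every ε > 0 there exists δ > 0 such that any two distinct points x, y with d(x,y) < δ are joined by an arc in the space of diameter less than ε. -/
/-- `A` is an arc from `x` to `y`: the homeomorphic image of `[0,1]`
whose endpoints are `x` and `y`. -/
def IsArcIn {E : Type*} [TopologicalSpace E] (A : Set E) (x y : E) : Prop :=
  ∃ f : ℝ → E, ContinuousOn f (Set.Icc 0 1) ∧ Set.InjOn f (Set.Icc 0 1) ∧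
    f '' Set.Icc 0 1 = A ∧ f 0 = x ∧ f 1 = y

open Set Metric Filter Topology

namespace PeanoULACProof

set_option linter.unusedSectionVars false

variable {X : Type*} [MetricSpace X] [CompactSpace X] [ConnectedSpace X]
  [LocallyConnectedSpace X]

def GapProp (f : ℝ → X) (C : Set ℝ) : Prop :=
  ∀ a ∈ C, ∀ b ∈ C, a < b → (∀ t ∈ C, t ∉ Ioo a b) → f a = f b

lemma ulc (η : ℝ) (hη : 0 < η) :
    ∃ θ : ℝ, 0 < θ ∧ θ ≤ η ∧ ∀ p q : X, dist p q < θ →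
      ∃ S : Set X, IsPreconnected S ∧ p ∈ S ∧ q ∈ S ∧ Metric.diam S ≤ η := by
  have h : ∀ x : X, ∃ V : Set X, V ⊆ Metric.ball x (η/4) ∧ IsOpen V ∧ x ∈ V ∧ IsConnected V :=
    fun x => locallyConnectedSpace_iff_subsets_isOpen_isConnected.mp ‹_› x _
      (Metric.ball_mem_nhds x (by positivity))
  choose V hVsub hVopen hVmem hVconn using h
  obtain ⟨θ, hθpos, hcov⟩ := lebesgue_number_lemma_of_metric isCompact_univ hVopen
    (fun x _ => mem_iUnion.mpr ⟨x, hVmem x⟩)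
  refine ⟨min θ η, lt_min hθpos hη, min_le_right _ _, fun p q hpq => ?_⟩
  obtain ⟨i, hi⟩ := hcov p trivial
  have hd : Metric.diam (V i) ≤ η := by
    refine le_trans (Metric.diam_mono (hVsub i) Metric.isBounded_ball) ?_
    calc Metric.diam (Metric.ball i (η/4)) ≤ 2 * (η/4) := Metric.diam_ball (by positivity)
    _ ≤ η := by linarith
  refine ⟨V i, (hVconn i).isPreconnected, hi (Metric.mem_ball_self hθpos), hi ?_, hd⟩
  rw [Metric.mem_ball, dist_comm]
  exact lt_of_lt_of_le hpq (min_le_left _ _)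

lemma chain_conn {S : Set X} (hS : IsPreconnected S) {p q : X} (hp : p ∈ S) (hq : q ∈ S)
    {θ : ℝ} (hθ : 0 < θ) :
    ∃ (L : ℕ) (c : ℕ → X), c 0 = p ∧ (∀ i, L ≤ i → c i = q) ∧ (∀ i, c i ∈ S) ∧
      ∀ i, dist (c i) (c (i + 1)) < θ := by
  set Reach : Set X := {r | r ∈ S ∧ ∃ (L : ℕ) (c : ℕ → X), c 0 = p ∧ (∀ i, L ≤ i → c i = r) ∧
      (∀ i, c i ∈ S) ∧ ∀ i, dist (c i) (c (i + 1)) < θ} with hReach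
  have hext : ∀ r ∈ Reach, ∀ z ∈ S, dist r z < θ → z ∈ Reach := by
    rintro r ⟨hrS, L, c, hc0, hcL, hcS, hstep⟩ z hz hdz
    refine ⟨hz, L + 1, fun i => if i ≤ L then c i else z, by simp only [if_pos (Nat.zero_le L)]; exact hc0, ?_, ?_, ?_⟩
    · intro i hi
      have : ¬ (i ≤ L) := by omega
      simp [this]
    · intro i
      by_cases h : i ≤ L <;> simp [h, hcS i, hz]
    · intro i
      rcases lt_trichotomy i L with h | h | h
      · have h1 : i ≤ L := le_of_lt h
        have h2 : i + 1 ≤ L := h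
        simpa [h1, h2] using hstep i
      · subst h
        have h2 : ¬ (i + 1 ≤ i) := by omega
        simpa [le_refl, h2, hcL i le_rfl] using hdz
      · have h1 : ¬ (i ≤ L) := by omega
        have h2 : ¬ (i + 1 ≤ L) := by omega
        simpa [h1, h2] using hθ
  have hpR : p ∈ Reach :=
    ⟨hp, 0, fun _ => p, rfl, fun _ _ => rfl, fun _ => hp, fun _ => by simpa using hθ⟩
  by_contra hcon
  have hqR : q ∉ Reach := fun h => hcon h.2
  have hunion : S ⊆ (⋃ r ∈ Reach, Metric.ball r θ) ∪ ⋃ r ∈ S \ Reach, Metric.ball r θ := by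
    intro s hs
    by_cases h : s ∈ Reach
    · exact Or.inl (mem_biUnion h (Metric.mem_ball_self hθ))
    · exact Or.inr (mem_biUnion ⟨hs, h⟩ (Metric.mem_ball_self hθ))
  obtain ⟨z, hzS, hzU, hzV⟩ : (S ∩ ((⋃ r ∈ Reach, Metric.ball r θ) ∩
      ⋃ r ∈ S \ Reach, Metric.ball r θ)).Nonempty := by
    refine hS _ _ (isOpen_biUnion fun _ _ => Metric.isOpen_ball)
      (isOpen_biUnion fun _ _ => Metric.isOpen_ball) hunion
      ⟨p, hp, mem_biUnion hpR (Metric.mem_ball_self hθ)⟩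
      ⟨q, hq, mem_biUnion ⟨hq, hqR⟩ (Metric.mem_ball_self hθ)⟩
  obtain ⟨r, hrR, hzr⟩ := mem_iUnion₂.mp hzU
  obtain ⟨r', hr'SR, hzr'⟩ := mem_iUnion₂.mp hzV
  have hzReach : z ∈ Reach := hext r hrR z hzS (by rwa [dist_comm, ← Metric.mem_ball])
  exact hr'SR.2 (hext z hzReach r' hr'SR.1 (by rw [dist_comm]; exact Metric.mem_ball'.mp hzr'))

lemma exists_min_C {f : ℝ → X} (hf : ContinuousOn f (Icc 0 1)) :
    ∃ C : Set ℝ, C ⊆ Icc 0 1 ∧ IsClosed C ∧ 0 ∈ C ∧ 1 ∈ C ∧ GapProp f C ∧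
      ∀ a ∈ C, ∀ b ∈ C, a < b → f a = f b → ∀ t ∈ C, t ∉ Ioo a b := by
  set S : Set (Set ℝ) := {C | C ⊆ Icc 0 1 ∧ IsClosed C ∧ 0 ∈ C ∧ 1 ∈ C ∧ GapProp f C} with hS
  have hIcc : Icc (0:ℝ) 1 ∈ S := by
    refine ⟨subset_rfl, isClosed_Icc, by norm_num, by norm_num, ?_⟩
    intro a ha b hb hab hno
    exfalso
    refine hno ((a+b)/2) ⟨by linarith [ha.1], by linarith [hb.2]⟩ ⟨by linarith, by linarith⟩
  have hchain : ∀ c ⊆ S, IsChain (· ⊆ ·) c → ∃ lb ∈ S, ∀ s ∈ c, lb ⊆ s := by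
    intro c hcS hch
    rcases c.eq_empty_or_nonempty with rfl | hne
    · exact ⟨Icc 0 1, hIcc, by simp⟩
    refine ⟨⋂₀ c, ⟨?_, ?_, ?_, ?_, ?_⟩, fun s hs => sInter_subset_of_mem hs⟩
    · obtain ⟨s, hs⟩ := hne; exact (sInter_subset_of_mem hs).trans (hcS hs).1
    · exact isClosed_sInter fun s hs => (hcS hs).2.1
    · exact fun s hs => (hcS hs).2.2.1
    · exact fun s hs => (hcS hs).2.2.2.1
    -- gap property for the intersection
    intro a ha b hb hab hno
    set m := (a + b) / 2 with hm
    have hmab : m ∈ Ioo a b := ⟨by simp [hm]; linarith, by simp [hm]; linarith⟩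
    have hm0 : ∃ s₀ ∈ c, m ∉ s₀ := by
      by_contra h
      push_neg at h
      exact hno m (fun s hs => h s hs) hmab
    obtain ⟨s₀, hs₀c, hms₀⟩ := hm0
    set g : Set ℝ → ℝ := fun s => sSup (s ∩ Icc a m) with hg
    set h : Set ℝ → ℝ := fun s => sInf (s ∩ Icc m b) with hh
    have hamem : ∀ s ∈ c, a ∈ s ∩ Icc a m := fun s hs => ⟨ha s hs, le_refl a, le_of_lt hmab.1⟩
    have hbmem : ∀ s ∈ c, b ∈ s ∩ Icc m b := fun s hs => ⟨hb s hs, le_of_lt hmab.2, le_refl b⟩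
    have hgmem : ∀ s ∈ c, g s ∈ s ∩ Icc a m := fun s hs =>
      (((hcS hs).2.1.inter isClosed_Icc).csSup_mem ⟨a, hamem s hs⟩
        ((isBounded_Icc a m).subset inter_subset_right).bddAbove)
    have hhmem : ∀ s ∈ c, h s ∈ s ∩ Icc m b := fun s hs =>
      (((hcS hs).2.1.inter isClosed_Icc).csInf_mem ⟨b, hbmem s hs⟩
        ((isBounded_Icc m b).subset inter_subset_right).bddBelow)
    have hgmono : ∀ s ∈ c, ∀ t ∈ c, s ⊆ t → g s ≤ g t := fun s hs t ht hst =>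
      csSup_le_csSup ((isBounded_Icc a m).subset inter_subset_right).bddAbove
        ⟨a, hamem s hs⟩ (inter_subset_inter_left _ hst)
    have hhanti : ∀ s ∈ c, ∀ t ∈ c, s ⊆ t → h t ≤ h s := fun s hs t ht hst =>
      csInf_le_csInf ((isBounded_Icc m b).subset inter_subset_right).bddBelow
        ⟨b, hbmem s hs⟩ (inter_subset_inter_left _ hst)
    -- for s ⊆ s₀, (g s, h s) is a gap of s
    have hsgap : ∀ s ∈ c, s ⊆ s₀ → f (g s) = f (h s) := by
      intro s hs hss₀
      have hgs := hgmem s hs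
      have hhs := hhmem s hs
      have hglth : g s < h s := by
        by_contra hcon
        push_neg at hcon
        have h1 : g s ≤ m := hgs.2.2
        have h2 : m ≤ h s := hhs.2.1
        have : g s = m := le_antisymm h1 (h2.trans hcon)
        exact hms₀ (hss₀ (this ▸ hgs.1))
      refine (hcS hs).2.2.2.2 (g s) hgs.1 (h s) hhs.1 hglth ?_
      rintro t hts ⟨ht1, ht2⟩
      rcases le_or_gt t m with htm | htm
      · have : t ≤ g s := le_csSup ((isBounded_Icc a m).subset inter_subset_right).bddAbove
          ⟨hts, (hgs.2.1.trans (le_of_lt ht1)), htm⟩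
        exact absurd ht1 (not_lt.mpr this)
      · have : h s ≤ t := csInf_le ((isBounded_Icc m b).subset inter_subset_right).bddBelow
          ⟨hts, le_of_lt htm, (le_of_lt ht2).trans hhs.2.2⟩
        exact absurd ht2 (not_lt.mpr this)
    -- the infimum of g over the subchain is a
    set T : Set (Set ℝ) := {s | s ∈ c ∧ s ⊆ s₀} with hT
    have hs₀T : s₀ ∈ T := ⟨hs₀c, subset_rfl⟩
    have hTmin : ∀ s1 ∈ c, ∃ s2 ∈ T, s2 ⊆ s1 := by
      intro s1 hs1
      rcases hch.total hs₀c hs1 with h' | h'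
      · exact ⟨s₀, hs₀T, h'⟩
      · exact ⟨s1, ⟨hs1, h'⟩, subset_rfl⟩
    have hTmin2 : ∀ s1 ∈ T, ∀ s2 ∈ T, ∃ s3 ∈ T, s3 ⊆ s1 ∧ s3 ⊆ s2 := by
      intro s1 hs1 s2 hs2
      rcases hch.total hs1.1 hs2.1 with h' | h'
      · exact ⟨s1, hs1, subset_rfl, h'⟩
      · exact ⟨s2, hs2, h', subset_rfl⟩
    -- key approximation
    have key : ∀ η : ℝ, 0 < η → ∃ s ∈ T, g s < a + η ∧ b - η < h s := by
      intro η hη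
      -- first: inf over T of g is a
      have hbddg : BddBelow (g '' T) := ⟨a, by rintro y ⟨s, hs, rfl⟩; exact (hgmem s hs.1).2.1⟩
      have hneg : (g '' T).Nonempty := ⟨g s₀, s₀, hs₀T, rfl⟩
      set α := sInf (g '' T) with hα
      have hαa : a ≤ α := le_csInf hneg (by rintro y ⟨s, hs, rfl⟩; exact (hgmem s hs.1).2.1)
      have hαm : α ≤ m := csInf_le_of_le hbddg ⟨s₀, hs₀T, rfl⟩ (hgmem s₀ hs₀c).2.2
      have hαmem : α ∈ ⋂₀ c := by
        intro s1 hs1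
        obtain ⟨s2, hs2T, hs2s1⟩ := hTmin s1 hs1
        -- α = sInf (g '' T') where T' = members of T inside s2
        set T' : Set (Set ℝ) := {s | s ∈ T ∧ s ⊆ s2} with hT'
        have hT'ne : T'.Nonempty := by
          obtain ⟨s3, hs3, h31, h32⟩ := hTmin2 s2 hs2T s2 hs2T
          exact ⟨s3, hs3, h31⟩
        have hbddg' : BddBelow (g '' T') := hbddg.mono (image_mono (f := g) (fun s hs => hs.1))
        have hle : sInf (g '' T') ≤ α := by
          refine le_csInf hneg ?_
          rintro y ⟨s, hs, rfl⟩
          obtain ⟨s3, hs3T, h31, h32⟩ := hTmin2 s hs s2 hs2T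
          exact csInf_le_of_le hbddg' ⟨s3, ⟨hs3T, h32⟩, rfl⟩ (hgmono s3 hs3T.1 s hs.1 h31)
        have hge : α ≤ sInf (g '' T') :=
          le_csInf (hT'ne.image g) (by rintro y ⟨s, hs, rfl⟩; exact csInf_le hbddg ⟨s, hs.1, rfl⟩)
        have hmemcl : sInf (g '' T') ∈ closure (g '' T') :=
          csInf_mem_closure (hT'ne.image g) hbddg'
        have hsub' : g '' T' ⊆ s2 := by rintro y ⟨s, hs, rfl⟩; exact hs.2 (hgmem s hs.1.1).1
        have : α ∈ s2 := by
          rw [← le_antisymm hle hge]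
          exact (hcS hs2T.1).2.1.closure_subset (closure_mono hsub' hmemcl)
        exact hs2s1 this
      have hαeq : α = a := by
        by_contra hcon
        have : α ∈ Ioo a b := ⟨lt_of_le_of_ne hαa (Ne.symm hcon), lt_of_le_of_lt hαm hmab.2⟩
        exact hno α hαmem this
      -- same for h: sup over T of h is b
      have hbddh : BddAbove (h '' T) := ⟨b, by rintro y ⟨s, hs, rfl⟩; exact (hhmem s hs.1).2.2⟩
      have hneh : (h '' T).Nonempty := ⟨h s₀, s₀, hs₀T, rfl⟩
      set β := sSup (h '' T) with hβ
      have hβb : β ≤ b := csSup_le hneh (by rintro y ⟨s, hs, rfl⟩; exact (hhmem s hs.1).2.2)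
      have hβm : m ≤ β := le_csSup_of_le hbddh ⟨s₀, hs₀T, rfl⟩ (hhmem s₀ hs₀c).2.1
      have hβmem : β ∈ ⋂₀ c := by
        intro s1 hs1
        obtain ⟨s2, hs2T, hs2s1⟩ := hTmin s1 hs1
        set T' : Set (Set ℝ) := {s | s ∈ T ∧ s ⊆ s2} with hT'
        have hT'ne : T'.Nonempty := ⟨s2, hs2T, subset_rfl⟩
        have hbddh' : BddAbove (h '' T') := hbddh.mono (image_mono (f := h) (fun s hs => hs.1))
        have hle : β ≤ sSup (h '' T') := by
          refine csSup_le hneh ?_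
          rintro y ⟨s, hs, rfl⟩
          obtain ⟨s3, hs3T, h31, h32⟩ := hTmin2 s hs s2 hs2T
          exact le_csSup_of_le hbddh' ⟨s3, ⟨hs3T, h32⟩, rfl⟩ (hhanti s3 hs3T.1 s hs.1 h31)
        have hge : sSup (h '' T') ≤ β :=
          csSup_le (hT'ne.image h) (by rintro y ⟨s, hs, rfl⟩; exact le_csSup hbddh ⟨s, hs.1, rfl⟩)
        have hmemcl : sSup (h '' T') ∈ closure (h '' T') :=
          csSup_mem_closure (hT'ne.image h) hbddh'
        have hsub' : h '' T' ⊆ s2 := by rintro y ⟨s, hs, rfl⟩; exact hs.2 (hhmem s hs.1.1).1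
        have : β ∈ s2 := by
          rw [le_antisymm hle hge]
          exact (hcS hs2T.1).2.1.closure_subset (closure_mono hsub' hmemcl)
        exact hs2s1 this
      have hβeq : β = b := by
        by_contra hcon
        have : β ∈ Ioo a b := ⟨lt_of_lt_of_le hmab.1 hβm, lt_of_le_of_ne hβb hcon⟩
        exact hno β hβmem this
      -- extract s
      have h1 : ∃ y ∈ g '' T, y < a + η :=
        exists_lt_of_csInf_lt hneg (by rw [← hα, hαeq]; linarith)
      have h2 : ∃ y ∈ h '' T, b - η < y :=
        exists_lt_of_lt_csSup hneh (by rw [← hβ, hβeq]; linarith)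
      obtain ⟨y1, ⟨sg, hsg, rfl⟩, hy1⟩ := h1
      obtain ⟨y2, ⟨sh, hsh, rfl⟩, hy2⟩ := h2
      obtain ⟨s3, hs3, h31, h32⟩ := hTmin2 sg hsg sh hsh
      refine ⟨s3, hs3, lt_of_le_of_lt (hgmono s3 hs3.1 sg hsg.1 h31) hy1,
        lt_of_lt_of_le hy2 (hhanti s3 hs3.1 sh hsh.1 h32)⟩
    -- sequences and limits
    have hseq : ∀ n : ℕ, ∃ s ∈ T, g s < a + 1/(n+1) ∧ b - 1/(n+1) < h s := fun n =>
      key (1/(n+1)) (by positivity)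
    choose sq hsqT hga hhb using hseq
    have haIcc : a ∈ Icc (0:ℝ) 1 := (hcS hs₀c).1 (ha s₀ hs₀c)
    have hbIcc : b ∈ Icc (0:ℝ) 1 := (hcS hs₀c).1 (hb s₀ hs₀c)
    have htend_a : Tendsto (fun n => g (sq n)) atTop (𝓝 a) := by
      refine tendsto_of_tendsto_of_tendsto_of_le_of_le
        (tendsto_const_nhds) ?_ (fun n => (hgmem _ (hsqT n).1).2.1) (fun n => le_of_lt (hga n))
      have : Tendsto (fun n : ℕ => a + 1/((n:ℝ)+1)) atTop (𝓝 (a + 0)) :=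
        tendsto_const_nhds.add tendsto_one_div_add_atTop_nhds_zero_nat
      simpa using this
    have htend_b : Tendsto (fun n => h (sq n)) atTop (𝓝 b) := by
      refine tendsto_of_tendsto_of_tendsto_of_le_of_le
        ?_ (tendsto_const_nhds) (fun n => le_of_lt (hhb n)) (fun n => (hhmem _ (hsqT n).1).2.2)
      have : Tendsto (fun n : ℕ => b - 1/((n:ℝ)+1)) atTop (𝓝 (b - 0)) :=
        tendsto_const_nhds.sub tendsto_one_div_add_atTop_nhds_zero_nat
      simpa using this
    have hfa : Tendsto (fun n => f (g (sq n))) atTop (𝓝 (f a)) := by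
      refine ((hf a haIcc).tendsto).comp ?_
      refine tendsto_nhdsWithin_of_tendsto_nhds_of_eventually_within _ htend_a ?_
      exact Eventually.of_forall (fun n => (hcS (hsqT n).1).1 (hgmem _ (hsqT n).1).1)
    have hfb : Tendsto (fun n => f (h (sq n))) atTop (𝓝 (f b)) := by
      refine ((hf b hbIcc).tendsto).comp ?_
      refine tendsto_nhdsWithin_of_tendsto_nhds_of_eventually_within _ htend_b ?_
      exact Eventually.of_forall (fun n => (hcS (hsqT n).1).1 (hhmem _ (hsqT n).1).1)
    have heqn : (fun n => f (g (sq n))) = (fun n => f (h (sq n))) :=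
      funext fun n => hsgap (sq n) (hsqT n).1 (hsqT n).2
    rw [heqn] at hfa
    exact tendsto_nhds_unique hfa hfb
  obtain ⟨M, hMmin⟩ := zorn_superset S hchain
  have hMS := hMmin.1
  refine ⟨M, hMS.1, hMS.2.1, hMS.2.2.1, hMS.2.2.2.1, hMS.2.2.2.2, ?_⟩
  intro a haM b hbM hab hfab t htM htIoo
  -- minimality: remove Ioo a b
  have hM'S : M \ Ioo a b ∈ S := by
    refine ⟨diff_subset.trans hMS.1, hMS.2.1.inter isOpen_Ioo.isClosed_compl, ?_, ?_, ?_⟩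
    · exact ⟨hMS.2.2.1, fun h => absurd h.1 (not_lt.mpr (hMS.1 haM).1)⟩
    · exact ⟨hMS.2.2.2.1, fun h => absurd h.2 (not_lt.mpr (hMS.1 hbM).2)⟩
    intro p hp q hq hpq hno
    by_cases hcase : ∀ u ∈ M, u ∉ Ioo p q
    · exact hMS.2.2.2.2 p hp.1 q hq.1 hpq hcase
    push_neg at hcase
    obtain ⟨u, huM, huIoo⟩ := hcase
    have huab : u ∈ Ioo a b := by
      by_contra h
      exact (hno u ⟨huM, h⟩) huIoo
    have haM' : a ∈ M \ Ioo a b := ⟨haM, fun h => absurd rfl (ne_of_lt h.1)⟩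
    have hbM' : b ∈ M \ Ioo a b := ⟨hbM, fun h => absurd rfl (ne_of_gt h.2)⟩
    have hanotpq : a ∉ Ioo p q := hno a haM'
    have hbnotpq : b ∉ Ioo p q := hno b hbM'
    have hap : a ≤ p := by
      rcases not_and_or.mp hanotpq with h | h
      · exact le_of_not_gt h
      · exact absurd (lt_trans huab.1 huIoo.2) h
    have hqb : q ≤ b := by
      rcases not_and_or.mp hbnotpq with h | h
      · exact absurd (lt_trans huIoo.1 huab.2) h
      · exact le_of_not_gt h
    have hpa : p = a := by
      rcases not_and_or.mp (hp.2) with h | h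
      · exact le_antisymm (le_of_not_gt h) hap
      · exact absurd (lt_of_lt_of_le hpq hqb) h
    have hqb' : q = b := by
      rcases not_and_or.mp (hq.2) with h | h
      · exact absurd (lt_of_le_of_lt hap hpq) h
      · exact le_antisymm hqb (le_of_not_gt h)
    rw [hpa, hqb']
    exact hfab
  have := hMmin.2 hM'S diff_subset
  exact (this htM).2 htIoo

lemma phi_exists {f : ℝ → X} (hf : ContinuousOn f (Icc 0 1)) {C : Set ℝ}
    (hC1 : C ⊆ Icc 0 1) (hC2 : IsClosed C) (h0 : 0 ∈ C) (h1 : 1 ∈ C)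
    (hgap : GapProp f C)
    (hmin : ∀ a ∈ C, ∀ b ∈ C, a < b → f a = f b → ∀ t ∈ C, t ∉ Ioo a b) :
    ∃ φ : ℝ → ℝ, Continuous φ ∧ Monotone φ ∧
      (∀ a ∈ C, ∀ b ∈ C, f a = f b → φ a = φ b) ∧
      (∀ a ∈ C, ∀ b ∈ C, a < b → f a ≠ f b → φ a < φ b) := by
  classical
  -- countable dense subset of C
  haveI : Nonempty ↥C := ⟨⟨0, h0⟩⟩
  obtain ⟨Dsub, hDcnt, hDdense⟩ := TopologicalSpace.exists_countable_dense ↥C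
  have hDne : (Subtype.val '' Dsub : Set ℝ).Nonempty := by
    obtain ⟨z, hz⟩ := hDdense.nonempty
    exact ⟨z, z, hz, rfl⟩
  obtain ⟨e, he⟩ := (hDcnt.image Subtype.val).exists_eq_range hDne
  have heC : ∀ k, e k ∈ C := by
    intro k
    have : e k ∈ Subtype.val '' Dsub := he ▸ mem_range_self k
    obtain ⟨z, _, hz⟩ := this
    exact hz ▸ z.2
  have hdense : ∀ (l r c0 : ℝ), c0 ∈ C → c0 ∈ Ioo l r → ∃ k, e k ∈ Ioo l r := by
    intro l r c0 hc0 hc0Ioo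
    have hUo : IsOpen {z : ↥C | (z : ℝ) ∈ Ioo l r} := isOpen_Ioo.preimage continuous_subtype_val
    have hUne : {z : ↥C | (z : ℝ) ∈ Ioo l r}.Nonempty := ⟨⟨c0, hc0⟩, hc0Ioo⟩
    obtain ⟨z, hz1, hz2⟩ := hDdense.inter_open_nonempty _ hUo hUne
    have : (z : ℝ) ∈ Subtype.val '' Dsub := ⟨z, hz2, rfl⟩
    rw [he] at this
    obtain ⟨k, hk⟩ := this
    exact ⟨k, hk ▸ hz1⟩
  -- the building blocks
  set ρ : ℕ → ℝ → ℝ := fun k t => Metric.diam (f '' (C ∩ Icc (e k) t)) with hρ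
  have hρnonneg : ∀ k t, 0 ≤ ρ k t := fun k t => Metric.diam_nonneg
  set Dm := Metric.diam (univ : Set X) with hDm
  have hρle : ∀ k t, ρ k t ≤ Dm := fun k t =>
    Metric.diam_mono (subset_univ _) Metric.isBounded_of_compactSpace
  have hρmono : ∀ k, Monotone (ρ k) := by
    intro k s t hst
    exact Metric.diam_mono (image_mono (inter_subset_inter_right _ (Icc_subset_Icc_right hst)))
      Metric.isBounded_of_compactSpace
  -- quantitative continuity
  have hUC := Metric.uniformContinuousOn_iff.mp
    (isCompact_Icc.uniformContinuousOn_of_continuous hf)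
  have key : ∀ η : ℝ, 0 < η → ∃ d : ℝ, 0 < d ∧ ∀ k, ∀ s t : ℝ, s ≤ t → t - s < d →
      ρ k t ≤ ρ k s + 2 * η := by
    intro η hη
    obtain ⟨d, hd, hUCd⟩ := hUC η hη
    refine ⟨d, hd, fun k s t hst hts => ?_⟩
    by_cases hA : (C ∩ Icc (e k) s).Nonempty
    · -- w = sup of left part; q0 = inf of added part
      have hAclosed : IsClosed (C ∩ Icc (e k) s) := hC2.inter isClosed_Icc
      have hAbdd : BddAbove (C ∩ Icc (e k) s) := ⟨s, fun p hp => hp.2.2⟩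
      set w := sSup (C ∩ Icc (e k) s) with hw
      have hwmem : w ∈ C ∩ Icc (e k) s := hAclosed.csSup_mem hA hAbdd
      by_cases hQ : (C ∩ Ioc s t).Nonempty
      · set q0 := sInf (C ∩ Ioc s t) with hq0
        have hq0mem : q0 ∈ C ∩ Icc s t := by
          have h1 : q0 ∈ closure (C ∩ Ioc s t) := csInf_mem_closure hQ ⟨s, fun p hp => le_of_lt hp.2.1⟩
          have h2 : closure (C ∩ Ioc s t) ⊆ C ∩ Icc s t :=
            closure_minimal (inter_subset_inter_right _ Ioc_subset_Icc_self)
              (hC2.inter isClosed_Icc)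
          exact h2 h1
        have hfwq0 : f w = f q0 := by
          rcases eq_or_lt_of_le (hwmem.2.2.trans hq0mem.2.1) with heq | hlt
          · rw [heq]
          · refine hgap w hwmem.1 q0 hq0mem.1 hlt ?_
            rintro u huC ⟨hu1, hu2⟩
            rcases le_or_gt u s with hus | hus
            · have : u ≤ w := le_csSup hAbdd ⟨huC, hwmem.2.1.trans (le_of_lt hu1), hus⟩
              exact absurd hu1 (not_lt.mpr this)
            · have : q0 ≤ u := csInf_le ⟨s, fun p hp => le_of_lt hp.2.1⟩
                ⟨huC, hus, (le_of_lt hu2).trans hq0mem.2.2⟩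
              exact absurd hu2 (not_lt.mpr this)
        -- bound all pairs
        have hpair : ∀ y1 ∈ f '' (C ∩ Icc (e k) t), ∀ y2 ∈ f '' (C ∩ Icc (e k) t),
            dist y1 y2 ≤ ρ k s + 2 * η := by
          have hKsub : ∀ p, p ∈ C ∩ Icc (e k) t → ¬ p ≤ s → dist (f p) (f q0) ≤ η := by
            intro p hp hps
            push_neg at hps
            have hd1 : dist p q0 < d := by
              rw [Real.dist_eq, abs_lt]
              exact ⟨by linarith [hq0mem.2.2, hps], by linarith [hq0mem.2.1, hp.2.2]⟩
            exact le_of_lt (hUCd p (hC1 hp.1) q0 (hC1 hq0mem.1) hd1)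
          have hfwA : f w ∈ f '' (C ∩ Icc (e k) s) := mem_image_of_mem f hwmem
          rintro y1 ⟨p1, hp1, rfl⟩ y2 ⟨p2, hp2, rfl⟩
          by_cases h1' : p1 ≤ s <;> by_cases h2' : p2 ≤ s
          · exact le_trans (Metric.dist_le_diam_of_mem Metric.isBounded_of_compactSpace
              (mem_image_of_mem f (show p1 ∈ C ∩ Icc (e k) s from ⟨hp1.1, hp1.2.1, h1'⟩))
              (mem_image_of_mem f (show p2 ∈ C ∩ Icc (e k) s from ⟨hp2.1, hp2.2.1, h2'⟩)))
              (by nlinarith [hη])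
          · calc dist (f p1) (f p2) ≤ dist (f p1) (f w) + dist (f w) (f p2) := dist_triangle _ _ _
              _ ≤ ρ k s + η := by
                  have := hKsub p2 hp2 h2'
                  rw [hfwq0]
                  refine add_le_add (Metric.dist_le_diam_of_mem Metric.isBounded_of_compactSpace
                    (mem_image_of_mem f (show p1 ∈ C ∩ Icc (e k) s from ⟨hp1.1, hp1.2.1, h1'⟩))
                    (hfwq0 ▸ hfwA)) ?_
                  rw [dist_comm]
                  exact this
              _ ≤ ρ k s + 2 * η := by linarith
          · calc dist (f p1) (f p2) ≤ dist (f p1) (f w) + dist (f w) (f p2) := dist_triangle _ _ _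
              _ ≤ η + ρ k s := by
                  refine add_le_add ?_ (Metric.dist_le_diam_of_mem Metric.isBounded_of_compactSpace
                    (hfwq0 ▸ hfwA)
                    (mem_image_of_mem f (show p2 ∈ C ∩ Icc (e k) s from ⟨hp2.1, hp2.2.1, h2'⟩)))
                  rw [hfwq0, dist_comm]
                  rw [dist_comm]
                  exact hKsub p1 hp1 h1'
              _ ≤ ρ k s + 2 * η := by linarith
          · calc dist (f p1) (f p2) ≤ dist (f p1) (f q0) + dist (f q0) (f p2) := dist_triangle _ _ _
              _ ≤ η + η := add_le_add (hKsub p1 hp1 h1')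
                  (by rw [dist_comm]; exact hKsub p2 hp2 h2')
              _ ≤ ρ k s + 2 * η := by linarith [hρnonneg k s]
        exact Metric.diam_le_of_forall_dist_le
          (by linarith [hρnonneg k s]) hpair
      · -- no added points: images are equal
        have himeq : f '' (C ∩ Icc (e k) t) = f '' (C ∩ Icc (e k) s) := by
          refine le_antisymm ?_ (image_mono (inter_subset_inter_right _
            (Icc_subset_Icc_right hst)))
          rintro y ⟨p, hp, rfl⟩
          rcases le_or_gt p s with hps | hps
          · exact mem_image_of_mem f ⟨hp.1, hp.2.1, hps⟩
          · exact absurd ⟨hp.1, hps, hp.2.2⟩ (fun h => hQ ⟨p, h⟩)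
        rw [hρ]
        simp only []
        rw [himeq]
        linarith [hη]
    · -- left part empty : everything added is within (s,t]
      push_neg at hA
      have hall : ∀ p ∈ C ∩ Icc (e k) t, s < p := by
        intro p hp
        by_contra hps
        push_neg at hps
        exact eq_empty_iff_forall_notMem.mp hA p ⟨hp.1, hp.2.1, hps⟩
      have : ρ k t ≤ η := by
        refine Metric.diam_le_of_forall_dist_le (le_of_lt hη) ?_
        rintro y1 ⟨p1, hp1, rfl⟩ y2 ⟨p2, hp2, rfl⟩
        have hd1 : dist p1 p2 < d := by
          rw [Real.dist_eq, abs_lt]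
          exact ⟨by linarith [hall p1 hp1, hp2.2.2, hts], by linarith [hall p2 hp2, hp1.2.2, hts]⟩
        exact le_of_lt (hUCd p1 (hC1 hp1.1) p2 (hC1 hp2.1) hd1)
      linarith [hρnonneg k s, hη]
  -- continuity of each ρ k
  have hρcont : ∀ k, Continuous (ρ k) := by
    intro k
    rw [Metric.continuous_iff]
    intro t ε hε
    obtain ⟨d, hd, hkey⟩ := key (ε/4) (by linarith)
    refine ⟨d, hd, fun t' ht' => ?_⟩
    rw [Real.dist_eq] at ht'
    rw [Real.dist_eq, abs_lt]
    rcases le_total t' t with h | h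
    · have h1 := hkey k t' t h (by rw [abs_lt] at ht'; linarith)
      have h2 := hρmono k h
      constructor <;> linarith
    · have h1 := hkey k t t' h (by rw [abs_lt] at ht'; linarith)
      have h2 := hρmono k h
      constructor <;> linarith
  -- the function φ
  have hsummable : ∀ t : ℝ, Summable (fun k : ℕ => (1/2 : ℝ)^k * ρ k t) := by
    intro t
    refine Summable.of_nonneg_of_le (fun k => mul_nonneg (by positivity) (hρnonneg k t))
      (fun k => ?_) ((summable_geometric_of_lt_one (by norm_num : (0:ℝ) ≤ 1/2) (by norm_num : (1:ℝ)/2 < 1)).mul_right Dm)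
    exact mul_le_mul_of_nonneg_left (hρle k t) (by positivity)
  set φ : ℝ → ℝ := fun t => ∑' k, (1/2 : ℝ)^k * ρ k t with hφ
  have hφcont : Continuous φ := by
    refine continuous_tsum (fun k => (continuous_const.mul (hρcont k))) 
      ((summable_geometric_of_lt_one (by norm_num : (0:ℝ) ≤ 1/2) (by norm_num : (1:ℝ)/2 < 1)).mul_right Dm) ?_
    intro k t
    rw [Real.norm_eq_abs, abs_of_nonneg (mul_nonneg (by positivity) (hρnonneg k t))]
    exact mul_le_mul_of_nonneg_left (hρle k t) (by positivity)
  have hφmono : Monotone φ := by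
    intro s t hst
    exact Summable.tsum_le_tsum (fun k => mul_le_mul_of_nonneg_left (hρmono k hst) (by positivity))
      (hsummable s) (hsummable t)
  -- gap constancy
  have hρgap : ∀ a ∈ C, ∀ b ∈ C, a < b → f a = f b → ∀ k, ρ k a = ρ k b := by
    intro a ha b hb hab hfab k
    have hIoo := hmin a ha b hb hab hfab
    rcases le_or_gt (e k) a with hek | hek
    · have himeq : f '' (C ∩ Icc (e k) b) = f '' (C ∩ Icc (e k) a) := by
        refine le_antisymm ?_ (image_mono (inter_subset_inter_right _
          (Icc_subset_Icc_right (le_of_lt hab))))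
        rintro y ⟨p, hp, rfl⟩
        rcases le_or_gt p a with hpa | hpa
        · exact mem_image_of_mem f ⟨hp.1, hp.2.1, hpa⟩
        · have : p = b := by
            rcases eq_or_lt_of_le hp.2.2 with h' | h'
            · exact h'
            · exact absurd ⟨hpa, h'⟩ (hIoo p hp.1)
          rw [this, ← hfab]
          exact mem_image_of_mem f ⟨ha, hek, le_refl a⟩
      rw [hρ]
      simp only []
      rw [himeq]
    · -- e k > a : both sides are (sub)singletons with same diameter
      have h2 : ρ k a = 0 := by
        have : C ∩ Icc (e k) a = ∅ := by
          ext p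
          simp only [mem_inter_iff, mem_Icc, mem_empty_iff_false, iff_false]
          rintro ⟨_, hp1, hp2⟩
          linarith
        rw [hρ]
        simp only [this, image_empty, Metric.diam_empty]
      have h3 : ρ k b = 0 := by
        have hsub : C ∩ Icc (e k) b ⊆ {b} := by
          rintro p ⟨hpC, hp1, hp2⟩
          have hpa : a < p := lt_of_lt_of_le hek hp1
          rcases eq_or_lt_of_le hp2 with h' | h'
          · exact h'
          · exact absurd ⟨hpa, h'⟩ (hIoo p hpC)
        rw [hρ]
        exact Metric.diam_subsingleton ((subsingleton_singleton.anti hsub).image f)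
      rw [h2, h3]
  have hφgap : ∀ a ∈ C, ∀ b ∈ C, f a = f b → φ a = φ b := by
    intro a ha b hb hfab
    rcases lt_trichotomy a b with h | h | h
    · exact tsum_congr fun k => by rw [hρgap a ha b hb h hfab k]
    · rw [h]
    · exact (tsum_congr fun k => by rw [hρgap b hb a ha h hfab.symm k]).symm
  -- strict separation
  have hφsep : ∀ a ∈ C, ∀ b ∈ C, a < b → f a ≠ f b → φ a < φ b := by
    intro a ha b hb hab hfab
    -- find c0 < c* in C ∩ Ioo a b
    have hc1 : ∃ c1 ∈ C, c1 ∈ Ioo a b := by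
      by_contra h
      push_neg at h
      exact hfab (hgap a ha b hb hab (fun t ht hIoo => (h t ht) hIoo))
    obtain ⟨c1, hc1C, hc1Ioo⟩ := hc1
    have hc0cs : ∃ c0 cs : ℝ, c0 ∈ C ∧ cs ∈ C ∧ a < c0 ∧ c0 < cs ∧ cs < b := by
      by_cases hL : ∃ c0 ∈ C, c0 ∈ Ioo a c1
      · obtain ⟨c0, hc0C, hc0Ioo⟩ := hL
        exact ⟨c0, c1, hc0C, hc1C, hc0Ioo.1, hc0Ioo.2, hc1Ioo.2⟩
      · push_neg at hL
        have hfac1 : f a = f c1 := hgap a ha c1 hc1C hc1Ioo.1 (fun t ht hIoo => (hL t ht) hIoo)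
        by_cases hR : ∃ cs ∈ C, cs ∈ Ioo c1 b
        · obtain ⟨cs, hcsC, hcsIoo⟩ := hR
          exact ⟨c1, cs, hc1C, hcsC, hc1Ioo.1, hcsIoo.1, hcsIoo.2⟩
        · push_neg at hR
          have hfc1b : f c1 = f b := hgap c1 hc1C b hb hc1Ioo.2 (fun t ht hIoo => (hR t ht) hIoo)
          exact absurd (hfac1.trans hfc1b) hfab
    obtain ⟨c0, cs, hc0C, hcsC, hac0, hc0cs, hcsb⟩ := hc0cs
    obtain ⟨k, hk⟩ := hdense a cs c0 hc0C ⟨hac0, hc0cs⟩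
    have hekC := heC k
    -- ρ k a = 0
    have hρka : ρ k a = 0 := by
      have : C ∩ Icc (e k) a = ∅ := by
        ext p
        simp only [mem_inter_iff, mem_Icc, mem_empty_iff_false, iff_false]
        rintro ⟨_, hp1, hp2⟩
        linarith [hk.1]
      rw [hρ]
      simp only [this, image_empty, Metric.diam_empty]
    -- ρ k b > 0
    have hfekb : f (e k) ≠ f b := by
      intro heq
      have := hmin (e k) hekC b hb (lt_trans hk.2 hcsb) heq cs hcsC
      exact this ⟨hk.2, hcsb⟩
    have hρkb : 0 < ρ k b := by
      have hd := Metric.dist_le_diam_of_mem Metric.isBounded_of_compactSpace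
        (mem_image_of_mem f (show e k ∈ C ∩ Icc (e k) b from
          ⟨hekC, le_refl _, le_of_lt (lt_trans hk.2 hcsb)⟩))
        (mem_image_of_mem f (show b ∈ C ∩ Icc (e k) b from
          ⟨hb, le_of_lt (lt_trans hk.2 hcsb), le_refl b⟩))
      have : 0 < dist (f (e k)) (f b) := dist_pos.mpr hfekb
      exact lt_of_lt_of_le this hd
    refine Summable.tsum_lt_tsum_of_nonneg (i := k) (fun k' => mul_nonneg (by positivity) (hρnonneg k' a))
      (fun k' => mul_le_mul_of_nonneg_left (hρmono k' (le_of_lt hab)) (by positivity))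
      ?_ (hsummable b)
    rw [hρka, mul_zero]
    exact mul_pos (by positivity) hρkb
  exact ⟨φ, hφcont, hφmono, hφgap, hφsep⟩

lemma refine_step {x y : X} {θ θ' β : ℝ} (hθ' : 0 < θ')
    (hulc : ∀ p q : X, dist p q < θ →
      ∃ S : Set X, IsPreconnected S ∧ p ∈ S ∧ q ∈ S ∧ Metric.diam S ≤ β)
    (hchain : ∀ (S : Set X), IsPreconnected S → ∀ p ∈ S, ∀ q ∈ S,
      ∃ (L : ℕ) (c : ℕ → X), c 0 = p ∧ (∀ i, L ≤ i → c i = q) ∧ (∀ i, c i ∈ S) ∧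
        ∀ i, dist (c i) (c (i + 1)) < θ')
    (k : ℕ) (u : ℕ → X)
    (h0 : u 0 = x) (hy : ∀ i, 2^k ≤ i → u i = y) (hstep : ∀ i, dist (u i) (u (i+1)) < θ) :
    ∃ (m : ℕ) (u' : ℕ → X), 1 ≤ m ∧
      (u' 0 = x ∧ (∀ i, 2^(k+m) ≤ i → u' i = y) ∧ ∀ i, dist (u' i) (u' (i+1)) < θ') ∧
      ∀ i, dist (u' i) (u (i / 2^m)) ≤ β := by
  classical
  -- chains for each consecutive pair
  have hch : ∀ j : ℕ, ∃ (L : ℕ) (c : ℕ → X), c 0 = u j ∧ (∀ i, L ≤ i → c i = u (j+1)) ∧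
      (∀ i, dist (c i) (u j) ≤ β) ∧ ∀ i, dist (c i) (c (i + 1)) < θ' := by
    intro j
    obtain ⟨S, hSconn, hjS, hj1S, hSdiam⟩ := hulc (u j) (u (j+1)) (hstep j)
    obtain ⟨L, c, hc0, hcL, hcS, hcstep⟩ := hchain S hSconn (u j) hjS (u (j+1)) hj1S
    refine ⟨L, c, hc0, hcL, fun i => ?_, hcstep⟩
    exact le_trans (Metric.dist_le_diam_of_mem Metric.isBounded_of_compactSpace (hcS i) hjS) hSdiam
  choose L c hc0 hcL hcnear hcstep using hch
  set m := (Finset.range (2^k)).sup L + 1 with hm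
  have hm1 : 1 ≤ m := Nat.le_add_left 1 _
  have hmpow : 0 < 2^m := Nat.pow_pos (by norm_num)
  have hLle : ∀ j, j < 2^k → L j ≤ 2^m := by
    intro j hj
    have h1 : L j ≤ (Finset.range (2^k)).sup L := Finset.le_sup (Finset.mem_range.mpr hj)
    have h2 : m ≤ 2^m := (Nat.lt_two_pow_self (n := m)).le
    omega
  set u' : ℕ → X := fun i => if 2^(k+m) ≤ i then y
    else c (i / 2^m) (min (i % 2^m) (L (i / 2^m))) with hu'
  have hppos : 0 < 2^(k+m) := Nat.pow_pos (by norm_num)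
  refine ⟨m, u', hm1, ⟨?_, ?_, ?_⟩, ?_⟩
  · -- u' 0 = x
    have : ¬ 2^(k+m) ≤ 0 := by omega
    simp only [hu', this, if_false, Nat.zero_div, Nat.zero_mod, Nat.zero_min]
    rw [hc0 0, h0]
  · intro i hi
    simp only [hu', hi, if_true]
  · -- consecutive steps
    intro i
    by_cases hbig : 2^(k+m) ≤ i
    · have hbig1 : 2^(k+m) ≤ i + 1 := le_trans hbig (Nat.le_succ i)
      simp only [hu', hbig, hbig1, if_true]
      simpa using hθ'
    · push_neg at hbig
      set j := i / 2^m with hj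
      set r := i % 2^m with hr
      have hjk : j < 2^k := by
        rw [hj, Nat.div_lt_iff_lt_mul hmpow, ← pow_add]
        exact hbig
      have hrm : r < 2^m := Nat.mod_lt _ hmpow
      have hieq : 2^m * j + r = i := Nat.div_add_mod i (2^m)
      have hui : u' i = c j (min r (L j)) := by
        simp only [hu', if_neg (not_le.mpr hbig)]
        rfl
      by_cases hr1 : r + 1 < 2^m
      · -- i+1 in the same block
        have hsplit : i + 1 = (r + 1) + 2^m * j := by omega
        have hi1lt : i + 1 < 2^(k+m) := by
          have h1 : i + 1 < 2^m * (j+1) := by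
            rw [Nat.mul_succ, hsplit]
            omega
          calc i + 1 < 2^m * (j+1) := h1
            _ ≤ 2^m * 2^k := Nat.mul_le_mul_left _ hjk
            _ = 2^(k+m) := by rw [← pow_add, Nat.add_comm]
        have hdiv : (i+1) / 2^m = j := by
          rw [hsplit, Nat.add_mul_div_left _ _ hmpow, Nat.div_eq_of_lt hr1, Nat.zero_add]
        have hmod : (i+1) % 2^m = r + 1 := by
          rw [hsplit, Nat.add_mul_mod_self_left, Nat.mod_eq_of_lt hr1]
        have hui1 : u' (i+1) = c j (min (r+1) (L j)) := by
          simp only [hu', if_neg (not_le.mpr hi1lt), hdiv, hmod]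
        rw [hui, hui1]
        rcases le_or_gt (L j) r with hLr | hLr
        · rw [min_eq_right hLr, min_eq_right (le_trans hLr (Nat.le_succ r))]
          simpa using hθ'
        · rw [min_eq_left (Nat.le_of_lt_succ (Nat.lt_succ_of_lt hLr)),
            min_eq_left hLr]
          exact hcstep j r
      · -- r = 2^m - 1 : next block
        have hreq : r + 1 = 2^m := by omega
        have hi1 : i + 1 = 2^m * (j + 1) := by rw [Nat.mul_succ]; omega
        have hui1 : u' (i+1) = u (j+1) := by
          by_cases hend : 2^(k+m) ≤ i + 1
          · simp only [hu', hend, if_true]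
            have : 2^k ≤ j + 1 := by
              by_contra hcon
              push_neg at hcon
              have : j + 1 ≤ 2^k - 1 + 1 := by omega
              have h2 : i + 1 ≤ 2^m * 2^k := by
                calc i + 1 = 2^m * (j+1) := hi1
                  _ ≤ 2^m * 2^k := Nat.mul_le_mul_left _ (by omega)
              rw [← pow_add, Nat.add_comm m k] at h2
              -- i + 1 = 2^(k+m) exactly then, since also ≥
              have : i + 1 = 2^(k+m) := le_antisymm h2 hend
              -- then j + 1 = 2^k
              rw [this] at hi1
              rw [Nat.add_comm k m, pow_add] at hi1
              have := Nat.eq_of_mul_eq_mul_left hmpow hi1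
              omega
            exact (hy (j+1) this).symm
          · push_neg at hend
            have hdiv : (i+1) / 2^m = j + 1 := by rw [hi1, Nat.mul_div_cancel_left _ hmpow]
            have hmod : (i+1) % 2^m = 0 := by rw [hi1, Nat.mul_mod_right]
            simp only [hu', if_neg (not_le.mpr hend), hdiv, hmod, Nat.zero_min]
            rw [hc0 (j+1)]
        rw [hui, hui1]
        rcases le_or_gt (L j) r with hLr | hLr
        · rw [min_eq_right hLr, hcL j (L j) le_rfl]
          simpa using hθ'
        · -- L j = 2^m = r + 1
          have hLj : L j = 2^m := le_antisymm (hLle j hjk) (by omega)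
          have hmin : min r (L j) = L j - 1 := by
            rw [min_eq_left (by omega)]
            omega
          rw [hmin, ← hcL j (L j) le_rfl]
          have : L j - 1 + 1 = L j := by omega
          calc dist (c j (L j - 1)) (c j (L j))
              = dist (c j (L j - 1)) (c j (L j - 1 + 1)) := by rw [this]
            _ < θ' := hcstep j (L j - 1)
  · -- closeness to previous level
    intro i
    by_cases hbig : 2^(k+m) ≤ i
    · have hjk : 2^k ≤ i / 2^m := by
        rw [Nat.le_div_iff_mul_le hmpow, ← pow_add]
        exact hbig
      simp only [hu', hbig, if_true, hy _ hjk]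
      rw [dist_self]
      exact le_trans dist_nonneg (hcnear 0 0)
    · push_neg at hbig
      simp only [hu', if_neg (not_le.mpr hbig)]
      exact hcnear (i / 2^m) _

lemma arc_of_path {f : ℝ → X} (hf : ContinuousOn f (Icc 0 1)) (hne : f 0 ≠ f 1) :
    ∃ A : Set X, IsArcIn A (f 0) (f 1) ∧ A ⊆ f '' Icc 0 1 := by
  obtain ⟨C, hC1, hC2, h0, h1, hgap, hmin⟩ := exists_min_C hf
  obtain ⟨φ, hφcont, hφmono, hφgap, hφsep⟩ := phi_exists hf hC1 hC2 h0 h1 hgap hmin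
  have hφ01 : φ 0 < φ 1 := hφsep 0 h0 1 h1 one_pos hne
  have hden : (0:ℝ) < φ 1 - φ 0 := sub_pos.mpr hφ01
  set Φ : ℝ → ℝ := fun t => (φ t - φ 0) / (φ 1 - φ 0) with hΦdef
  have hΦcont : Continuous Φ := (hφcont.sub continuous_const).div_const _
  have hΦmono : Monotone Φ := fun s t hst =>
    (div_le_div_iff_of_pos_right hden).mpr (sub_le_sub_right (hφmono hst) _)
  have hΦ0 : Φ 0 = 0 := by simp [hΦdef]
  have hΦ1 : Φ 1 = 1 := div_self (ne_of_gt hden)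
  have hΦgap : ∀ a ∈ C, ∀ b ∈ C, f a = f b → Φ a = Φ b := by
    intro a ha b hb hfab
    simp only [hΦdef]
    rw [hφgap a ha b hb hfab]
  have hΦsep : ∀ a ∈ C, ∀ b ∈ C, a < b → f a ≠ f b → Φ a < Φ b := fun a ha b hb hab hfab =>
    (div_lt_div_iff_of_pos_right hden).mpr (sub_lt_sub_right (hφsep a ha b hb hab hfab) _)
  have hΦinj : ∀ a ∈ C, ∀ b ∈ C, Φ a = Φ b → f a = f b := by
    intro a ha b hb h
    rcases lt_trichotomy a b with h' | h' | h'
    · by_contra hne'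
      exact absurd h (ne_of_lt (hΦsep a ha b hb h' hne'))
    · rw [h']
    · by_contra hne'
      exact absurd h.symm (ne_of_lt (hΦsep b hb a ha h' (fun hh => hne' hh.symm)))
  -- the inverse-like map g
  set g : ℝ → ℝ := fun u => sSup {t | t ∈ C ∧ Φ t ≤ u} with hgdef
  have hTclosed : ∀ u : ℝ, IsClosed {t | t ∈ C ∧ Φ t ≤ u} := fun u =>
    hC2.inter (isClosed_Iic.preimage hΦcont)
  have hTbdd : ∀ u : ℝ, BddAbove {t | t ∈ C ∧ Φ t ≤ u} := fun u =>
    ⟨1, fun t ht => (hC1 ht.1).2⟩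
  have hg : ∀ u ∈ Icc (0:ℝ) 1, g u ∈ C ∧ Φ (g u) = u := by
    intro u hu
    have hTne : {t | t ∈ C ∧ Φ t ≤ u}.Nonempty := ⟨0, h0, by rw [hΦ0]; exact hu.1⟩
    have hmem : g u ∈ {t | t ∈ C ∧ Φ t ≤ u} := (hTclosed u).csSup_mem hTne (hTbdd u)
    refine ⟨hmem.1, ?_⟩
    rcases eq_or_lt_of_le hmem.2 with heq | hlt
    · exact heq
    exfalso
    set B : Set ℝ := {t | t ∈ C ∧ u ≤ Φ t} with hBdef
    have hBne : B.Nonempty := ⟨1, h1, by rw [hΦ1]; exact hu.2⟩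
    have hBbdd : BddBelow B := ⟨0, fun t ht => (hC1 ht.1).1⟩
    have hBclosed : IsClosed B := hC2.inter (isClosed_Ici.preimage hΦcont)
    have hbmem : sInf B ∈ B := hBclosed.csInf_mem hBne hBbdd
    have hglt : g u < sInf B := by
      by_contra hcon
      push_neg at hcon
      exact absurd (le_trans hbmem.2 (hΦmono hcon)) (not_le.mpr hlt)
    have hgap' : ∀ t ∈ C, t ∉ Ioo (g u) (sInf B) := by
      rintro t htC ⟨ht1, ht2⟩
      rcases le_or_gt (Φ t) u with hΦt | hΦt
      · exact absurd (le_csSup (hTbdd u) ⟨htC, hΦt⟩) (not_le.mpr ht1)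
      · exact absurd (csInf_le hBbdd ⟨htC, le_of_lt hΦt⟩) (not_le.mpr ht2)
    have hfeq : f (g u) = f (sInf B) := hgap (g u) hmem.1 (sInf B) hbmem.1 hglt hgap'
    have : Φ (g u) = Φ (sInf B) := hΦgap _ hmem.1 _ hbmem.1 hfeq
    rw [this] at hlt
    exact absurd hbmem.2 (not_le.mpr hlt)
  -- the arc parametrization
  set F : ℝ → X := fun u => f (g u) with hFdef
  have hF0 : F 0 = f 0 := by
    have h := hg 0 ⟨le_refl 0, zero_le_one⟩
    exact hΦinj _ h.1 0 h0 (by rw [h.2, hΦ0])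
  have hF1 : F 1 = f 1 := by
    have h := hg 1 ⟨zero_le_one, le_refl 1⟩
    exact hΦinj _ h.1 1 h1 (by rw [h.2, hΦ1])
  have hFinj : Set.InjOn F (Icc 0 1) := by
    intro u hu v hv huv
    have hgu := hg u hu
    have hgv := hg v hv
    have := hΦgap _ hgu.1 _ hgv.1 huv
    rw [hgu.2, hgv.2] at this
    exact this
  have hFcont : ContinuousOn F (Icc 0 1) := by
    rw [Metric.continuousOn_iff]
    intro u hu ε hε
    by_contra hcon
    push_neg at hcon
    have hseq : ∀ n : ℕ, ∃ v, v ∈ Icc (0:ℝ) 1 ∧ dist v u < 1/(n+1) ∧ ε ≤ dist (F v) (F u) := by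
      intro n
      obtain ⟨v, hv1, hv2, hv3⟩ := hcon (1/(n+1)) (by positivity)
      exact ⟨v, hv1, hv2, hv3⟩
    choose v hv1 hv2 hv3 using hseq
    have hCcpt : IsCompact C := isCompact_Icc.of_isClosed_subset hC2 hC1
    obtain ⟨t0, ht0C, ψ, hψmono, hψtend⟩ := hCcpt.tendsto_subseq (fun n => (hg (v n) (hv1 n)).1)
    have hvtend : Tendsto v atTop (𝓝 u) := by
      rw [tendsto_iff_dist_tendsto_zero]
      refine squeeze_zero (fun n => dist_nonneg) (fun n => le_of_lt (hv2 n)) ?_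
      exact tendsto_one_div_add_atTop_nhds_zero_nat
    have hvψtend : Tendsto (v ∘ ψ) atTop (𝓝 u) := hvtend.comp hψmono.tendsto_atTop
    have hΦt0 : Φ t0 = u := by
      have h1' : Tendsto (fun n => Φ (g (v (ψ n)))) atTop (𝓝 (Φ t0)) :=
        (hΦcont.tendsto t0).comp hψtend
      have h2' : (fun n => Φ (g (v (ψ n)))) = v ∘ ψ :=
        funext fun n => (hg (v (ψ n)) (hv1 (ψ n))).2
      rw [h2'] at h1'
      exact tendsto_nhds_unique h1' hvψtend
    have hfeq : f t0 = F u := by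
      have hgu := hg u hu
      exact hΦinj t0 ht0C _ hgu.1 (by rw [hΦt0, hgu.2])
    have hftend : Tendsto (fun n => F (v (ψ n))) atTop (𝓝 (F u)) := by
      rw [← hfeq]
      refine ((hf t0 (hC1 ht0C)).tendsto).comp ?_
      refine tendsto_nhdsWithin_of_tendsto_nhds_of_eventually_within _ hψtend ?_
      exact Eventually.of_forall (fun n => hC1 (hg (v (ψ n)) (hv1 (ψ n))).1)
    have : Tendsto (fun n => dist (F (v (ψ n))) (F u)) atTop (𝓝 0) := by
      have := hftend.dist (tendsto_const_nhds (x := F u))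
      simpa using this
    have hge : (0:ℝ) ≥ ε := ge_of_tendsto this (Eventually.of_forall (fun n => hv3 (ψ n)))
    linarith
  refine ⟨F '' Icc 0 1, ⟨F, hFcont, hFinj, rfl, hF0, hF1⟩, ?_⟩
  rintro y ⟨u, hu, rfl⟩
  exact mem_image_of_mem f (hC1 (hg u hu).1)

lemma small_path {ε : ℝ} (hε : 0 < ε) :
    ∃ δ : ℝ, 0 < δ ∧ ∀ x y : X, dist x y < δ →
      ∃ f : ℝ → X, ContinuousOn f (Icc 0 1) ∧ f 0 = x ∧ f 1 = y ∧
        Metric.diam (f '' Icc 0 1) ≤ ε := by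
  classical
  set β : ℕ → ℝ := fun n => ε/16 * (1/2)^n with hβ
  have hβpos : ∀ n, 0 < β n := fun n => by rw [hβ]; positivity
  have hβhalf : ∀ n, β (n+1) = β n / 2 := fun n => by rw [hβ]; simp [pow_succ]; ring
  have hβanti : ∀ a b : ℕ, a ≤ b → β b ≤ β a := by
    intro a b hab
    rw [hβ]
    simp only
    have := pow_le_pow_of_le_one (by norm_num : (0:ℝ) ≤ 1/2) (by norm_num) hab
    nlinarith
  have hθ : ∀ n : ℕ, ∃ θ : ℝ, 0 < θ ∧ θ ≤ β n ∧ ∀ p q : X, dist p q < θ →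
      ∃ S, IsPreconnected S ∧ p ∈ S ∧ q ∈ S ∧ Metric.diam S ≤ β n := fun n =>
    ulc (β n) (hβpos n)
  choose θ hθpos hθle hθulc using hθ
  refine ⟨θ 0, hθpos 0, fun x y hxy => ?_⟩
  set u0 : ℕ → X := fun i => if i = 0 then x else y with hu0
  have hgood0 : u0 0 = x ∧ (∀ i, 2^0 ≤ i → u0 i = y) ∧
      ∀ i, dist (u0 i) (u0 (i+1)) < θ 0 := by
    refine ⟨by simp [hu0], fun i hi => by
      have h1 : (1:ℕ) ≤ i := by simpa using hi
      have : i ≠ 0 := by omega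
      simp [hu0, this], fun i => ?_⟩
    rcases Nat.eq_zero_or_pos i with h | h
    · subst h
      simpa [hu0] using hxy
    · have h1 : i ≠ 0 := h.ne'
      have h2 : i + 1 ≠ 0 := by omega
      simpa [hu0, h1, h2] using hθpos 0
  have hstep : ∀ n (k : ℕ) (u : ℕ → X),
      (u 0 = x ∧ (∀ i, 2^k ≤ i → u i = y) ∧ ∀ i, dist (u i) (u (i+1)) < θ n) →
      ∃ (m : ℕ) (u' : ℕ → X), 1 ≤ m ∧
        (u' 0 = x ∧ (∀ i, 2^(k+m) ≤ i → u' i = y) ∧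
          ∀ i, dist (u' i) (u' (i+1)) < θ (n+1)) ∧
        ∀ i, dist (u' i) (u (i / 2^m)) ≤ β n := by
    rintro n k u ⟨h1, h2, h3⟩
    exact refine_step (hθpos (n+1)) (hθulc n)
      (fun S hS p hp q hq => chain_conn hS hp hq (hθpos (n+1))) k u h1 h2 h3
  choose mf uf hmf hgf hcf using hstep
  set T : ∀ n : ℕ, {p : ℕ × (ℕ → X) // p.2 0 = x ∧ (∀ i, 2^p.1 ≤ i → p.2 i = y) ∧
      ∀ i, dist (p.2 i) (p.2 (i+1)) < θ n} :=
    fun n => Nat.rec (⟨(0, u0), hgood0⟩ :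
        {p : ℕ × (ℕ → X) // p.2 0 = x ∧ (∀ i, 2^p.1 ≤ i → p.2 i = y) ∧
          ∀ i, dist (p.2 i) (p.2 (i+1)) < θ 0})
      (fun n prev => ⟨(prev.1.1 + mf n prev.1.1 prev.1.2 prev.2,
        uf n prev.1.1 prev.1.2 prev.2), hgf n prev.1.1 prev.1.2 prev.2⟩) n with hT
  set k : ℕ → ℕ := fun n => (T n).1.1 with hk
  set u : ℕ → ℕ → X := fun n => (T n).1.2 with hu
  have hTgood : ∀ n, u n 0 = x ∧ (∀ i, 2^(k n) ≤ i → u n i = y) ∧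
      ∀ i, dist (u n i) (u n (i+1)) < θ n := fun n => (T n).2
  have hksucc : ∀ n, k (n+1) = k n + mf n (k n) (u n) (T n).2 := fun n => rfl
  have husucc : ∀ n, u (n+1) = uf n (k n) (u n) (T n).2 := fun n => rfl
  have hclose : ∀ n i, dist (u (n+1) i) (u n (i / 2^(k (n+1) - k n))) ≤ β n := by
    intro n i
    have hd : k (n+1) - k n = mf n (k n) (u n) (T n).2 := by rw [hksucc]; omega
    rw [husucc, hd]
    exact hcf n (k n) (u n) (T n).2 i
  have hkmono : ∀ n, k n < k (n+1) := by
    intro n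
    rw [hksucc]
    have := hmf n (k n) (u n) (T n).2
    omega
  set v : ℕ → ℝ → X := fun n t => u n (⌊t * 2^(k n)⌋₊) with hv
  have hfloor : ∀ (t : ℝ), 0 ≤ t → ∀ n,
      (⌊t * 2^(k (n+1))⌋₊) / 2^(k (n+1) - k n) = ⌊t * 2^(k n)⌋₊ := by
    intro t ht n
    rw [← Nat.floor_div_natCast]
    congr 1
    set Δ := k (n+1) - k n with hΔdef
    have hΔ : k (n+1) = k n + Δ := by have := hkmono n; omega
    rw [hΔ, pow_add]
    have hpos : ((2:ℝ))^Δ ≠ 0 := by positivity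
    push_cast
    field_simp
  have hvstep : ∀ (t : ℝ), 0 ≤ t → ∀ n, dist (v (n+1) t) (v n t) ≤ β n := by
    intro t ht n
    rw [hv]
    simp only
    rw [← hfloor t ht n]
    exact hclose n _
  have hvcauchy : ∀ (t : ℝ), 0 ≤ t → ∀ n N, n ≤ N →
      dist (v N t) (v n t) ≤ 2*β n - 2*β N := by
    intro t ht n N hnN
    induction N, hnN using Nat.le_induction with
    | base => simp
    | succ N hnN ih =>
      calc dist (v (N+1) t) (v n t) ≤ dist (v (N+1) t) (v N t) + dist (v N t) (v n t) :=
            dist_triangle _ _ _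
        _ ≤ β N + (2*β n - 2*β N) := add_le_add (hvstep t ht N) ih
        _ = 2*β n - 2*β (N+1) := by rw [hβhalf N]; ring
  have hβtend : Tendsto (fun n : ℕ => 2 * β n) atTop (𝓝 0) := by
    have h1 : Tendsto (fun n : ℕ => (1/2 : ℝ)^n) atTop (𝓝 0) :=
      tendsto_pow_atTop_nhds_zero_of_lt_one (by norm_num) (by norm_num)
    have h2 := h1.const_mul (2 * (ε/16))
    rw [mul_zero] at h2
    refine h2.congr (fun n => ?_)
    rw [hβ]
    ring
  have hex : ∀ t : ℝ, ∃ l : X, 0 ≤ t → Tendsto (fun n => v n t) atTop (𝓝 l) := by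
    intro t
    rcases le_or_gt 0 t with ht | ht
    · have hcs : CauchySeq (fun n => v n t) := by
        refine cauchySeq_of_le_tendsto_0 (fun n => 2 * β n) (fun a b N haN hbN => ?_) hβtend
        rcases le_total a b with h | h
        · rw [dist_comm]
          refine le_trans (hvcauchy t ht a b h)
            (show 2*β a - 2*β b ≤ 2*β N by
              have h1 := hβpos b
              have h2 := hβanti N a haN
              linarith)
        · refine le_trans (hvcauchy t ht b a h)
            (show 2*β b - 2*β a ≤ 2*β N by
              have h1 := hβpos a
              have h2 := hβanti N b hbN
              linarith)
      obtain ⟨l, hl⟩ := cauchySeq_tendsto_of_complete hcs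
      exact ⟨l, fun _ => hl⟩
    · exact ⟨x, fun h => absurd ht (not_lt.mpr h)⟩
  choose f hf using hex
  have hval0 : ∀ n, v n 0 = x := by
    intro n
    rw [hv]
    simp only
    rw [zero_mul, Nat.floor_zero]
    exact (hTgood n).1
  have hval1 : ∀ n, v n 1 = y := by
    intro n
    rw [hv]
    simp only
    have h2 : ((2:ℝ))^(k n) = ((2^(k n) : ℕ) : ℝ) := by push_cast; ring
    rw [one_mul, h2, Nat.floor_natCast]
    exact (hTgood n).2.1 _ le_rfl
  have hf0 : f 0 = x := by
    refine tendsto_nhds_unique (hf 0 le_rfl) ?_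
    rw [show (fun n => v n 0) = fun _ => x from funext hval0]
    exact tendsto_const_nhds
  have hf1 : f 1 = y := by
    refine tendsto_nhds_unique (hf 1 zero_le_one) ?_
    rw [show (fun n => v n 1) = fun _ => y from funext hval1]
    exact tendsto_const_nhds
  have hdistf : ∀ t : ℝ, 0 ≤ t → ∀ n, dist (f t) (v n t) ≤ 2 * β n := by
    intro t ht n
    have h1 : Tendsto (fun N => dist (v N t) (v n t)) atTop (𝓝 (dist (f t) (v n t))) :=
      (hf t ht).dist tendsto_const_nhds
    refine le_of_tendsto h1 ?_
    filter_upwards [eventually_ge_atTop n] with N hN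
    refine le_trans (hvcauchy t ht n N hN) ?_
    linarith [hβpos N]
  -- floors within one step
  have hnear : ∀ n, ∀ a b : ℝ, 0 ≤ a → a ≤ b → (b - a) * 2^(k n) < 1 →
      dist (v n b) (v n a) ≤ θ n := by
    intro n a b ha hab hd
    have hfl : ⌊a * 2^(k n)⌋₊ ≤ ⌊b * 2^(k n)⌋₊ :=
      Nat.floor_le_floor (by nlinarith [pow_pos (show (0:ℝ) < 2 by norm_num) (k n)])
    have hfu : ⌊b * 2^(k n)⌋₊ ≤ ⌊a * 2^(k n)⌋₊ + 1 := by
      have h1 : b * 2^(k n) < a * 2^(k n) + 1 := by nlinarith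
      have h2 : a * 2^(k n) < ⌊a * 2^(k n)⌋₊ + 1 := Nat.lt_floor_add_one _
      have h3 : b * 2^(k n) < (⌊a * 2^(k n)⌋₊ + 1 + 1 : ℕ) := by push_cast; linarith
      have := (Nat.floor_lt (by nlinarith [pow_pos (show (0:ℝ) < 2 by norm_num) (k n)])).mpr h3
      omega
    rw [hv]
    simp only
    rcases eq_or_lt_of_le hfl with heq | hlt
    · rw [← heq, dist_self]
      exact le_of_lt (hθpos n)
    · have : ⌊b * 2^(k n)⌋₊ = ⌊a * 2^(k n)⌋₊ + 1 := by omega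
      rw [this, dist_comm]
      exact le_of_lt ((hTgood n).2.2 _)
  have hcont : ContinuousOn f (Icc 0 1) := by
    rw [Metric.continuousOn_iff]
    intro t ht ε' hε'
    obtain ⟨n, hn⟩ : ∃ n, 2 * β n < 2 * ε' / 5 := by
      have := (hβtend.eventually (gt_mem_nhds (show (0:ℝ) < 2*ε'/5 by linarith))).exists
      exact this
    have hβn : β n < ε' / 5 := by linarith
    refine ⟨1 / 2^(k n), by positivity, fun s hs hst => ?_⟩
    have hvs : dist (v n s) (v n t) ≤ θ n := by
      rcases le_total s t with h | h
      · rw [dist_comm]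
        refine hnear n s t hs.1 h ?_
        rw [Real.dist_eq] at hst
        have : |s - t| < 1/2^(k n) := hst
        have h2 : t - s < 1/2^(k n) := by rw [abs_lt] at this; linarith
        have h3 : (0:ℝ) < 2^(k n) := by positivity
        rw [lt_div_iff₀ h3] at h2
        nlinarith
      · refine hnear n t s ht.1 h ?_
        rw [Real.dist_eq] at hst
        have h2 : s - t < 1/2^(k n) := by rw [abs_lt] at hst; linarith
        have h3 : (0:ℝ) < 2^(k n) := by positivity
        rw [lt_div_iff₀ h3] at h2
        nlinarith
    calc dist (f s) (f t) ≤ dist (f s) (v n s) + dist (v n s) (f t) := dist_triangle _ _ _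
      _ ≤ dist (f s) (v n s) + (dist (v n s) (v n t) + dist (v n t) (f t)) :=
          add_le_add (le_refl _) (dist_triangle _ _ _)
      _ ≤ 2 * β n + (θ n + 2 * β n) := by
          refine add_le_add (hdistf s hs.1 n) (add_le_add hvs ?_)
          rw [dist_comm]
          exact hdistf t ht.1 n
      _ ≤ 5 * β n := by linarith [hθle n]
      _ < ε' := by linarith
  have hbase : ∀ t ∈ Icc (0:ℝ) 1, dist (f t) x ≤ 3 * β 0 := by
    intro t htIcc
    have h1 : dist (v 0 t) x ≤ β 0 := by
      rw [hv]
      simp only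
      rcases Nat.eq_zero_or_pos (⌊t * 2^(k 0)⌋₊) with h | h
      · rw [h, (hTgood 0).1, dist_self]
        exact le_of_lt (hβpos 0)
      · rw [(hTgood 0).2.1 _ ?_]
        · rw [dist_comm]
          exact le_trans (le_of_lt hxy) (hθle 0)
        · have hk0 : (2:ℕ)^(k 0) = 1 := by rw [show k 0 = 0 from rfl, pow_zero]
          rw [hk0]
          exact h
    calc dist (f t) x ≤ dist (f t) (v 0 t) + dist (v 0 t) x := dist_triangle _ _ _
      _ ≤ 2 * β 0 + β 0 := add_le_add (hdistf t htIcc.1 0) h1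
      _ = 3 * β 0 := by ring
  refine ⟨f, hcont, hf0, hf1, ?_⟩
  refine Metric.diam_le_of_forall_dist_le (le_of_lt hε) ?_
  rintro y1 ⟨s, hs, rfl⟩ y2 ⟨t, htt, rfl⟩
  calc dist (f s) (f t) ≤ dist (f s) x + dist x (f t) := dist_triangle _ _ _
    _ ≤ 3 * β 0 + 3 * β 0 := add_le_add (hbase s hs) (by rw [dist_comm]; exact hbase t htt)
    _ ≤ ε := by
        have : β 0 = ε/16 := by rw [hβ]; simp
        rw [this]
        linarith

end PeanoULACProof

theorem peano_continuum_ULAC {X : Type*} [MetricSpace X]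
    [CompactSpace X] [ConnectedSpace X] [LocallyConnectedSpace X] :
    ∀ ε : ℝ, 0 < ε → ∃ δ : ℝ, 0 < δ ∧
      ∀ x y : X, x ≠ y → dist x y < δ →
        ∃ A : Set X, IsArcIn A x y ∧ Metric.diam A < ε := by
  intro ε hε
  obtain ⟨δ, hδ, hpath⟩ := PeanoULACProof.small_path (X := X) (half_pos hε)
  refine ⟨δ, hδ, fun x y hxy hd => ?_⟩
  obtain ⟨f, hfc, hf0, hf1, hdiam⟩ := hpath x y hd
  have hne : f 0 ≠ f 1 := by rw [hf0, hf1]; exact hxy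
  obtain ⟨A, hA, hAsub⟩ := PeanoULACProof.arc_of_path hfc hne
  rw [hf0, hf1] at hA
  refine ⟨A, hA, lt_of_le_of_lt ?_ (half_lt_self hε)⟩
  exact le_trans (Metric.diam_mono hAsub Metric.isBounded_of_compactSpace) hdiam
end

section
/- Let X ⊆ ℝ^n be a continuum with increasing LC function f. Let ω = (m, R_1, …, R_k) be a witnessing chain, and let 1 ≤ i ≤ k. Then for all x, y ∈ R_i ∩ X, the connected component of x in B_{2^{-m}}(R_i) ∩ X equals the connected component of y in B_{2^{-m}}(R_i) ∩ X. -/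
/-- A rational box in `ℝ^n`: a product of open intervals with rational endpoints. -/
def IsRatBox {n : ℕ} (R : Set (EuclideanSpace ℝ (Fin n))) : Prop :=
  ∃ a b : Fin n → ℚ, (∀ i, (a i : ℝ) < b i) ∧
    R = {x | ∀ i, (a i : ℝ) < x i ∧ x i < (b i : ℝ)}


lemma IsRatBox.isBounded {n : ℕ} {R : Set (EuclideanSpace ℝ (Fin n))}
    (h : IsRatBox R) : Bornology.IsBounded R := by
  obtain ⟨a, b, hab, rfl⟩ := h
  rw [Metric.isBounded_iff]
  refine ⟨Real.sqrt (∑ j, ((b j : ℝ) - a j) ^ 2), fun x hx y hy => ?_⟩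
  rw [EuclideanSpace.dist_eq]
  apply Real.sqrt_le_sqrt
  apply Finset.sum_le_sum
  intro j _
  have h1 : x j ∈ Set.Icc (a j : ℝ) (b j : ℝ) := ⟨(hx j).1.le, (hx j).2.le⟩
  have h2 : y j ∈ Set.Icc (a j : ℝ) (b j : ℝ) := ⟨(hy j).1.le, (hy j).2.le⟩
  have hd : dist (x j) (y j) ≤ (b j : ℝ) - a j := Real.dist_le_of_mem_Icc h1 h2
  have : (0:ℝ) ≤ dist (x j) (y j) := dist_nonneg
  nlinarith

theorem witnessing_chain_component_independent {n : ℕ}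
    (X : Set (EuclideanSpace ℝ (Fin n)))
    (hXcompact : IsCompact X) (hXconn : IsConnected X)
    (f : ℕ → ℕ) (hf : Monotone f)
    (hLC : ∀ k : ℕ, ∀ p ∈ X,
      X ∩ Metric.ball p ((2 : ℝ) ^ (-(f k : ℤ))) ⊆
        connectedComponentIn (X ∩ Metric.ball p ((2 : ℝ) ^ (-(k : ℤ)))) p)
    (m k : ℕ) (R : Fin (k + 1) → Set (EuclideanSpace ℝ (Fin n)))
    (hbox : ∀ i, IsRatBox (R i))
    (hchain : ∀ i : Fin k, (R i.castSucc ∩ R i.succ ∩ X).Nonempty)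
    (hdiam : ∀ i, Metric.diam (R i) < (2 : ℝ) ^ (-(f m : ℤ)))
    (i : Fin (k + 1)) :
    ∀ x ∈ R i ∩ X, ∀ y ∈ R i ∩ X,
      connectedComponentIn ((⋃ p ∈ R i, Metric.ball p ((2 : ℝ) ^ (-(m : ℤ)))) ∩ X) x =
      connectedComponentIn ((⋃ p ∈ R i, Metric.ball p ((2 : ℝ) ^ (-(m : ℤ)))) ∩ X) y := by
  intro x hx y hy
  have hxX : x ∈ X := hx.2
  have hyx : dist y x < (2 : ℝ) ^ (-(f m : ℤ)) :=
    lt_of_le_of_lt (Metric.dist_le_diam_of_mem (hbox i).isBounded hy.1 hx.1) (hdiam i)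
  have hy' : y ∈ connectedComponentIn (X ∩ Metric.ball x ((2 : ℝ) ^ (-(m : ℤ)))) x :=
    hLC m x hxX ⟨hy.2, by simpa [Metric.mem_ball] using hyx⟩
  set C := connectedComponentIn (X ∩ Metric.ball x ((2 : ℝ) ^ (-(m : ℤ)))) x with hC
  have hxC : x ∈ C := mem_connectedComponentIn ⟨hxX, Metric.mem_ball_self (by positivity)⟩
  have hCsub : C ⊆ (⋃ p ∈ R i, Metric.ball p ((2 : ℝ) ^ (-(m : ℤ)))) ∩ X := by
    refine (connectedComponentIn_subset _ _).trans ?_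
    rintro z ⟨hzX, hzb⟩
    exact ⟨Set.mem_biUnion hx.1 hzb, hzX⟩
  have hCconn : IsPreconnected C := isPreconnected_connectedComponentIn
  have : y ∈ connectedComponentIn ((⋃ p ∈ R i, Metric.ball p ((2 : ℝ) ^ (-(m : ℤ)))) ∩ X) x :=
    hCconn.subset_connectedComponentIn hxC hCsub hy'
  exact connectedComponentIn_eq this
end

section
/- Let X ⊆ ℝ^n be a continuum with increasing LC function f, let U ⊆ ℝ^n be open, and let x, y be distinct points in the same connected component of U ∩ X. Then there is a witnessing chain ω = (m, R_1, …, R_k) from x to y (i.e., x ∈ R_1 ∩ X and y ∈ R_k ∩ X) such that the closure of V_ω = ⋃_{i=1}^k B_{2^{-m}}(R_i) is contained in U. -/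
section helpers

lemma clopen_induction {E : Type*} [PseudoMetricSpace E] {K : Set E} (hK : IsPreconnected K)
    (P : E → Prop) (r : E → ℝ) (hr : ∀ z ∈ K, 0 < r z)
    (step : ∀ z ∈ K, ∀ w ∈ K, dist w z < r z → (P z ↔ P w))
    {x y : E} (hx : x ∈ K) (hy : y ∈ K) (hPx : P x) : P y := by
  by_contra hPy
  have hu : IsOpen (⋃ z ∈ {z | z ∈ K ∧ P z}, Metric.ball z (r z)) :=
    isOpen_biUnion fun _ _ => Metric.isOpen_ball
  have hv : IsOpen (⋃ z ∈ {z | z ∈ K ∧ ¬ P z}, Metric.ball z (r z)) :=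
    isOpen_biUnion fun _ _ => Metric.isOpen_ball
  have hcov : K ⊆ (⋃ z ∈ {z | z ∈ K ∧ P z}, Metric.ball z (r z)) ∪
      (⋃ z ∈ {z | z ∈ K ∧ ¬ P z}, Metric.ball z (r z)) := by
    intro z hz
    by_cases hPz : P z
    · exact Or.inl (Set.mem_biUnion ⟨hz, hPz⟩ (Metric.mem_ball_self (hr z hz)))
    · exact Or.inr (Set.mem_biUnion ⟨hz, hPz⟩ (Metric.mem_ball_self (hr z hz)))
  obtain ⟨w, hwK, hwu, hwv⟩ := hK _ _ hu hv hcov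
    ⟨x, hx, Set.mem_biUnion ⟨hx, hPx⟩ (Metric.mem_ball_self (hr x hx))⟩
    ⟨y, hy, Set.mem_biUnion ⟨hy, hPy⟩ (Metric.mem_ball_self (hr y hy))⟩
  obtain ⟨z₁, ⟨hz₁K, hPz₁⟩, hwz₁⟩ := Set.mem_iUnion₂.1 hwu
  obtain ⟨z₂, ⟨hz₂K, hPz₂⟩, hwz₂⟩ := Set.mem_iUnion₂.1 hwv
  exact hPz₂ (((step z₂ hz₂K w hwK (Metric.mem_ball.1 hwz₂)).2)
    ((step z₁ hz₁K w hwK (Metric.mem_ball.1 hwz₁)).1 hPz₁))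

lemma chain_snoc {E : Type*} [PseudoMetricSpace E] {ε : ℝ} {k : ℕ} {p : Fin (k+1) → E} {w : E}
    (h : ∀ i : Fin k, dist (p i.castSucc) (p i.succ) < ε)
    (hw : dist (p (Fin.last k)) w < ε) :
    ∀ i : Fin (k+1), dist ((Fin.snoc p w : Fin (k+2) → E) i.castSucc)
      ((Fin.snoc p w : Fin (k+2) → E) i.succ) < ε := by
  intro i
  induction i using Fin.lastCases with
  | last =>
      rw [Fin.succ_last, Fin.snoc_last, Fin.snoc_castSucc]
      exact hw
  | cast j =>
      rw [Fin.succ_castSucc, Fin.snoc_castSucc, Fin.snoc_castSucc]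
      exact h j

lemma exists_chain {E : Type*} [PseudoMetricSpace E] {K : Set E} (hK : IsPreconnected K)
    {x y : E} (hx : x ∈ K) (hy : y ∈ K) {ε : ℝ} (hε : 0 < ε) :
    ∃ (k : ℕ) (p : Fin (k+1) → E), p 0 = x ∧ p (Fin.last k) = y ∧ (∀ i, p i ∈ K) ∧
      ∀ i : Fin k, dist (p i.castSucc) (p i.succ) < ε := by
  set P : E → Prop := fun z => ∃ (k : ℕ) (p : Fin (k+1) → E), p 0 = x ∧ p (Fin.last k) = z ∧
      (∀ i, p i ∈ K) ∧ ∀ i : Fin k, dist (p i.castSucc) (p i.succ) < ε with hP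
  have ext : ∀ z w, w ∈ K → dist w z < ε → P z → P w := by
    rintro z w hwK hd ⟨k, p, h0, hl, hm, hdist⟩
    refine ⟨k+1, Fin.snoc p w, ?_, by rw [Fin.snoc_last], ?_, ?_⟩
    · rw [show (0 : Fin (k+2)) = Fin.castSucc 0 by simp, Fin.snoc_castSucc]
      exact h0
    · intro i
      induction i using Fin.lastCases with
      | last => rw [Fin.snoc_last]; exact hwK
      | cast j => rw [Fin.snoc_castSucc]; exact hm j
    · exact chain_snoc hdist (by rw [hl, dist_comm]; exact hd)
  have := clopen_induction hK P (fun _ => ε) (fun _ _ => hε)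
    (fun z hz w hw hd => ⟨ext z w hw hd, ext w z hz (by rw [dist_comm]; exact hd)⟩)
    hx hy ⟨0, fun _ => x, rfl, rfl, fun _ => hx, fun i => i.elim0⟩
  exact this

lemma two_zpow_pos {a : ℤ} : (0:ℝ) < (2:ℝ) ^ a := zpow_pos (by norm_num) _

lemma exists_two_zpow_lt {c : ℝ} (hc : 0 < c) : ∃ m : ℕ, (2:ℝ) ^ (-(m:ℤ)) < c := by
  obtain ⟨m, hm⟩ := exists_pow_lt_of_lt_one hc (by norm_num : (1/2 : ℝ) < 1)
  refine ⟨m, ?_⟩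
  calc (2:ℝ) ^ (-(m:ℤ)) = (1/2)^m := by
        rw [zpow_neg, zpow_natCast, one_div, inv_pow]
    _ < c := hm

lemma coord_dist_le {n : ℕ} (w c : EuclideanSpace ℝ (Fin n)) (i : Fin n) :
    dist (w i) (c i) ≤ dist w c := by
  rw [EuclideanSpace.dist_eq, show dist (w i) (c i) = Real.sqrt (dist (w i) (c i) ^ 2) from
    (Real.sqrt_sq dist_nonneg).symm]
  exact Real.sqrt_le_sqrt (Finset.single_le_sum
    (f := fun j => dist (w j) (c j) ^ 2) (fun j _ => sq_nonneg _) (Finset.mem_univ i))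

lemma dist_le_of_coords {n : ℕ} {w c : EuclideanSpace ℝ (Fin n)} {b : ℝ} (hb : 0 ≤ b)
    (h : ∀ i, dist (w i) (c i) ≤ b) : dist w c ≤ Real.sqrt n * b := by
  rw [EuclideanSpace.dist_eq]
  calc Real.sqrt (∑ i, dist (w i) (c i) ^ 2) ≤ Real.sqrt (∑ _i : Fin n, b ^ 2) :=
        Real.sqrt_le_sqrt (Finset.sum_le_sum fun i _ =>
          pow_le_pow_left₀ dist_nonneg (h i) 2)
    _ = Real.sqrt ((n : ℝ) * b ^ 2) := by
        rw [Finset.sum_const, Finset.card_univ, Fintype.card_fin, nsmul_eq_mul]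
    _ = Real.sqrt n * b := by
        rw [Real.sqrt_mul (Nat.cast_nonneg n), Real.sqrt_sq hb]

end helpers

lemma exists_ratBox {n : ℕ} (c : EuclideanSpace ℝ (Fin n)) {η : ℝ} (hη : 0 < η) :
    ∃ R : Set (EuclideanSpace ℝ (Fin n)), IsRatBox R ∧
      (∀ w : EuclideanSpace ℝ (Fin n), (∀ i, dist (w i) (c i) < η) → w ∈ R) ∧
      (∀ w ∈ R, ∀ i, dist (w i) (c i) < 2*η) := by
  have ha : ∀ i : Fin n, ∃ q : ℚ, c i - 2*η < (q:ℝ) ∧ (q:ℝ) < c i - η :=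
    fun i => exists_rat_btwn (by linarith)
  have hb : ∀ i : Fin n, ∃ q : ℚ, c i + η < (q:ℝ) ∧ (q:ℝ) < c i + 2*η :=
    fun i => exists_rat_btwn (by linarith)
  choose a ha1 ha2 using ha
  choose b hb1 hb2 using hb
  refine ⟨{x | ∀ i, (a i : ℝ) < x i ∧ x i < (b i : ℝ)},
    ⟨a, b, fun i => by linarith [ha2 i, hb1 i], rfl⟩, ?_, ?_⟩
  · intro w hw i
    have h := hw i
    rw [Real.dist_eq, abs_lt] at h
    exact ⟨by linarith [ha2 i], by linarith [hb1 i]⟩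
  · intro w hw i
    have h := hw i
    rw [Real.dist_eq, abs_lt]
    exact ⟨by linarith [ha1 i], by linarith [hb2 i]⟩

theorem exists_witnessing_chain {n : ℕ}
    (X : Set (EuclideanSpace ℝ (Fin n)))
    (hXcompact : IsCompact X) (hXconn : IsConnected X)
    (f : ℕ → ℕ) (hf : Monotone f)
    (hLC : ∀ k : ℕ, ∀ p ∈ X,
      X ∩ Metric.ball p ((2 : ℝ) ^ (-(f k : ℤ))) ⊆
        connectedComponentIn (X ∩ Metric.ball p ((2 : ℝ) ^ (-(k : ℤ)))) p)
    (U : Set (EuclideanSpace ℝ (Fin n))) (hU : IsOpen U)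
    (x y : EuclideanSpace ℝ (Fin n)) (hxy : x ≠ y)
    (hx : x ∈ U ∩ X) (hy : y ∈ connectedComponentIn (U ∩ X) x) :
    ∃ (m k : ℕ) (R : Fin (k + 1) → Set (EuclideanSpace ℝ (Fin n))),
      (∀ i, IsRatBox (R i)) ∧
      (∀ i : Fin k, (R i.castSucc ∩ R i.succ ∩ X).Nonempty) ∧
      (∀ i, Metric.diam (R i) < (2 : ℝ) ^ (-(f m : ℤ))) ∧
      x ∈ R 0 ∩ X ∧ y ∈ R (Fin.last k) ∩ X ∧
      closure (⋃ i, ⋃ p ∈ R i, Metric.ball p ((2 : ℝ) ^ (-(m : ℤ)))) ⊆ U := by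
  classical
  set C := connectedComponentIn (U ∩ X) x with hC
  have hCsub : C ⊆ U ∩ X := connectedComponentIn_subset _ _
  have hCconn : IsPreconnected C := isPreconnected_connectedComponentIn
  have hxC : x ∈ C := mem_connectedComponentIn hx
  have hXclosed : IsClosed X := hXcompact.isClosed
  -- local compact connected neighborhoods inside C
  have key : ∀ z : EuclideanSpace ℝ (Fin n), ∃ (ε : ℝ) (L : Set (EuclideanSpace ℝ (Fin n))), 0 < ε ∧ (z ∈ C →
      IsCompact L ∧ IsPreconnected L ∧ z ∈ L ∧ L ⊆ C ∧
        ∀ w ∈ X, dist w z < ε → w ∈ L) := by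
    intro z
    by_cases hz : z ∈ C
    · obtain ⟨hzU, hzX⟩ := hCsub hz
      obtain ⟨δ, hδ, hball⟩ := Metric.isOpen_iff.1 hU z hzU
      obtain ⟨k, hk⟩ := exists_two_zpow_lt hδ
      set D := connectedComponentIn (X ∩ Metric.ball z ((2:ℝ)^(-(k:ℤ)))) z with hD
      have hDsub : D ⊆ X ∩ Metric.ball z ((2:ℝ)^(-(k:ℤ))) := connectedComponentIn_subset _ _
      have hclX : closure D ⊆ X :=
        closure_minimal (hDsub.trans Set.inter_subset_left) hXclosed
      have hclB : closure D ⊆ Metric.closedBall z ((2:ℝ)^(-(k:ℤ))) :=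
        closure_minimal ((hDsub.trans Set.inter_subset_right).trans
          Metric.ball_subset_closedBall) Metric.isClosed_closedBall
      have hclU : closure D ⊆ U := by
        intro w hw
        exact hball (Metric.mem_ball.2 (lt_of_le_of_lt (Metric.mem_closedBall.1 (hclB hw)) hk))
      have hzD : z ∈ D := mem_connectedComponentIn ⟨hzX, Metric.mem_ball_self two_zpow_pos⟩
      refine ⟨(2:ℝ)^(-(f k : ℤ)), closure D, two_zpow_pos, fun _ => ?_⟩
      refine ⟨hXcompact.of_isClosed_subset isClosed_closure hclX,
        isPreconnected_connectedComponentIn.closure, subset_closure hzD, ?_, ?_⟩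
      · have h2 : closure D ⊆ connectedComponentIn (U ∩ X) z :=
          IsPreconnected.subset_connectedComponentIn
            isPreconnected_connectedComponentIn.closure (subset_closure hzD)
            (fun w hw => ⟨hclU hw, hclX hw⟩)
        rw [hC, connectedComponentIn_eq hz]
        exact h2
      · intro w hwX hd
        exact subset_closure (hLC k z hzX ⟨hwX, Metric.mem_ball.2 hd⟩)
    · exact ⟨1, ∅, one_pos, fun h => absurd h hz⟩
  choose ε L hε hL using key
  -- x and y lie in a common compact connected subset of C
  have hPy : ∃ K : Set (EuclideanSpace ℝ (Fin n)), IsCompact K ∧ IsPreconnected K ∧ x ∈ K ∧ y ∈ K ∧ K ⊆ C := by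
    refine clopen_induction hCconn
      (fun z => ∃ K : Set (EuclideanSpace ℝ (Fin n)), IsCompact K ∧ IsPreconnected K ∧ x ∈ K ∧ z ∈ K ∧ K ⊆ C)
      ε (fun z _ => hε z) ?_ hxC hy
      ⟨{x}, isCompact_singleton, isPreconnected_singleton, rfl, rfl,
        Set.singleton_subset_iff.2 hxC⟩
    intro z hz w hw hd
    obtain ⟨hLc, hLp, hzL, hLsub, hLb⟩ := hL z hz
    have hwL : w ∈ L z := hLb w (hCsub hw).2 hd
    constructor
    · rintro ⟨K0, hK0c, hK0p, hxK0, hzK0, hK0sub⟩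
      exact ⟨K0 ∪ L z, hK0c.union hLc, hK0p.union z hzK0 hzL hLp,
        Or.inl hxK0, Or.inr hwL, Set.union_subset hK0sub hLsub⟩
    · rintro ⟨K0, hK0c, hK0p, hxK0, hwK0, hK0sub⟩
      exact ⟨K0 ∪ L z, hK0c.union hLc, hK0p.union w hwK0 hwL hLp,
        Or.inl hxK0, Or.inr hzL, Set.union_subset hK0sub hLsub⟩
  obtain ⟨K, hKc, hKp, hxK, hyK, hKsub⟩ := hPy
  have hKU : K ⊆ U := fun z hz => (hCsub (hKsub hz)).1
  have hKX : K ⊆ X := fun z hz => (hCsub (hKsub hz)).2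
  obtain ⟨δ, hδpos, hthick⟩ := hKc.exists_thickening_subset_open hU hKU
  obtain ⟨m, hm⟩ := exists_two_zpow_lt (show (0:ℝ) < δ/4 by linarith)
  set s : ℝ := min ((2:ℝ)^(-(f m : ℤ))) (δ/4) with hs
  have hspos : 0 < s := lt_min two_zpow_pos (by linarith)
  have hsqn : 0 ≤ Real.sqrt n := Real.sqrt_nonneg _
  set η : ℝ := s / (8 * (Real.sqrt n + 1)) with hη
  have hηpos : 0 < η := div_pos hspos (by positivity)
  have hsη : s = η * (8*(Real.sqrt n + 1)) := by
    rw [hη]; field_simp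
  obtain ⟨k, c, hc0, hcl, hcK, hcd⟩ := exists_chain hKp hxK hyK hηpos
  have hbox := fun i : Fin (k+1) => exists_ratBox (c i) hηpos
  choose R hR1 hR2 hR3 using hbox
  have hcenter : ∀ i : Fin (k+1), c i ∈ R i :=
    fun i => hR2 i (c i) (fun j => by simpa using hηpos)
  -- distance from box points to center
  have hboxdist : ∀ i : Fin (k+1), ∀ w ∈ R i, dist w (c i) ≤ Real.sqrt n * (2*η) :=
    fun i w hw => dist_le_of_coords (by positivity) (fun j => (hR3 i w hw j).le)
  have h2ηs : Real.sqrt n * (2*η) ≤ s/4 := by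
    rw [hsη]; nlinarith [hηpos.le, hsqn]
  have h4ηs : Real.sqrt n * (4*η) ≤ s/2 := by
    rw [hsη]; nlinarith [hηpos.le, hsqn]
  refine ⟨m, k, R, hR1, ?_, ?_, ?_, ?_, ?_⟩
  · -- intersections
    intro i
    refine ⟨c i.succ, ⟨⟨?_, hcenter i.succ⟩, hKX (hcK i.succ)⟩⟩
    refine hR2 i.castSucc (c i.succ) (fun j => ?_)
    calc dist (c i.succ j) (c i.castSucc j) ≤ dist (c i.succ) (c i.castSucc) :=
          coord_dist_le _ _ j
      _ < η := by rw [dist_comm]; exact hcd i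
  · -- diameters
    intro i
    have hd : Metric.diam (R i) ≤ Real.sqrt n * (4*η) := by
      refine Metric.diam_le_of_forall_dist_le (by positivity) (fun w hw w' hw' => ?_)
      refine dist_le_of_coords (by positivity) (fun j => ?_)
      calc dist (w j) (w' j) ≤ dist (w j) (c i j) + dist (c i j) (w' j) := dist_triangle _ _ _
        _ ≤ 2*η + 2*η := by
            have h1 := hR3 i w hw j
            have h2 := hR3 i w' hw' j
            rw [dist_comm] at h2
            linarith
        _ = 4*η := by ring
    calc Metric.diam (R i) ≤ Real.sqrt n * (4*η) := hd
      _ ≤ s/2 := h4ηs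
      _ < s := by linarith
      _ ≤ (2:ℝ)^(-(f m : ℤ)) := min_le_left _ _
  · -- x ∈ R 0 ∩ X
    have := hcenter 0
    rw [hc0] at this
    exact ⟨this, hx.2⟩
  · -- y ∈ R last ∩ X
    have := hcenter (Fin.last k)
    rw [hcl] at this
    exact ⟨this, (hCsub hy).2⟩
  · -- closure of the union of balls
    have hsub : (⋃ i, ⋃ q ∈ R i, Metric.ball q ((2:ℝ)^(-(m:ℤ)))) ⊆
        ⋃ i, Metric.closedBall (c i) (δ/2) := by
      intro w hw
      simp only [Set.mem_iUnion] at hw ⊢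
      obtain ⟨i, q, hqR, hwq⟩ := hw
      refine ⟨i, Metric.mem_closedBall.2 ?_⟩
      have h1 : dist w q < (2:ℝ)^(-(m:ℤ)) := Metric.mem_ball.1 hwq
      have h2 : dist q (c i) ≤ Real.sqrt n * (2*η) := hboxdist i q hqR
      have h3 : dist w (c i) ≤ dist w q + dist q (c i) := dist_triangle _ _ _
      have hsδ : s ≤ δ/4 := min_le_right _ _
      linarith
    have hclosed : IsClosed (⋃ i, Metric.closedBall (c i) (δ/2)) :=
      isClosed_iUnion_of_finite (fun i => Metric.isClosed_closedBall)
    refine (closure_minimal hsub hclosed).trans ?_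
    intro w hw
    simp only [Set.mem_iUnion] at hw
    obtain ⟨i, hwi⟩ := hw
    refine hthick (Metric.mem_thickening_iff.2 ⟨c i, hcK i, ?_⟩)
    have := Metric.mem_closedBall.1 hwi
    linarith
end

section
/- Let h : [0,1] → ℝ^n be a homeomorphism onto its image A (an arc). Let m be a modulus of continuity for h and m₁ a modulus of continuity for h⁻¹ : A → [0,1]. Then g = m₁ ∘ m is an LC function for A: for every k ∈ ℕ and p ∈ A, A ∩ B_{2^{-g(k)}}(p) is contained in the connected component of p in A ∩ B_{2^{-k}}(p). -/
theorem modulus_gives_lc_function {n : ℕ}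
    (h : ℝ → EuclideanSpace ℝ (Fin n))
    (hcont : ContinuousOn h (Set.Icc 0 1))
    (hinj : Set.InjOn h (Set.Icc 0 1))
    (A : Set (EuclideanSpace ℝ (Fin n))) (hA : h '' Set.Icc 0 1 = A)
    (m m₁ : ℕ → ℕ)
    (hm : ∀ k : ℕ, ∀ s ∈ Set.Icc (0:ℝ) 1, ∀ t ∈ Set.Icc (0:ℝ) 1,
      |s - t| ≤ (2 : ℝ) ^ (-(m k : ℤ)) → dist (h s) (h t) < (2 : ℝ) ^ (-(k : ℤ)))
    (hm₁ : ∀ k : ℕ, ∀ s ∈ Set.Icc (0:ℝ) 1, ∀ t ∈ Set.Icc (0:ℝ) 1,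
      dist (h s) (h t) ≤ (2 : ℝ) ^ (-(m₁ k : ℤ)) → |s - t| < (2 : ℝ) ^ (-(k : ℤ))) :
    ∀ k : ℕ, ∀ p ∈ A,
      A ∩ Metric.ball p ((2 : ℝ) ^ (-(m₁ (m k) : ℤ))) ⊆
        connectedComponentIn (A ∩ Metric.ball p ((2 : ℝ) ^ (-(k : ℤ)))) p := by
  intro k p hp q hq
  rw [← hA] at hp
  obtain ⟨s, hs, rfl⟩ := hp
  obtain ⟨hqA, hqb⟩ := hq
  rw [← hA] at hqA
  obtain ⟨t, ht, rfl⟩ := hqA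
  have hdist : dist (h t) (h s) ≤ (2 : ℝ) ^ (-(m₁ (m k) : ℤ)) :=
    le_of_lt (Metric.mem_ball.mp hqb)
  have hts : |t - s| < (2 : ℝ) ^ (-(m (k) : ℤ)) := hm₁ (m k) t ht s hs hdist
  have hsub : Set.uIcc s t ⊆ Set.Icc (0:ℝ) 1 := Set.uIcc_subset_Icc hs ht
  have hSconn : IsPreconnected (h '' Set.uIcc s t) :=
    isPreconnected_uIcc.image h (hcont.mono hsub)
  have hSsub : h '' Set.uIcc s t ⊆ A ∩ Metric.ball (h s) ((2 : ℝ) ^ (-(k : ℤ))) := by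
    rintro x ⟨u, hu, rfl⟩
    constructor
    · rw [← hA]; exact ⟨u, hsub hu, rfl⟩
    · apply Metric.mem_ball.mpr
      apply hm k u (hsub hu) s hs
      have h1 : |u - s| ≤ |t - s| := by
        rcases le_total s t with hst | hst
        · rw [Set.uIcc_of_le hst] at hu
          rw [abs_of_nonneg (by linarith [hu.1] : (0:ℝ) ≤ u - s),
            abs_of_nonneg (by linarith : (0:ℝ) ≤ t - s)]
          linarith [hu.2]
        · rw [Set.uIcc_of_ge hst] at hu
          rw [abs_of_nonpos (by linarith [hu.2] : u - s ≤ 0),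
            abs_of_nonpos (by linarith : t - s ≤ 0)]
          linarith [hu.1]
      exact le_of_lt (lt_of_le_of_lt h1 hts)
  have hps : h s ∈ h '' Set.uIcc s t := ⟨s, Set.left_mem_uIcc, rfl⟩
  exact hSconn.subset_connectedComponentIn hps hSsub ⟨t, Set.right_mem_uIcc, rfl⟩
end

section
/- Let A ⊆ ℝ^n be an arc with parametrization h : [0,1] → A, and suppose the simple chain (V_1, …, V_l) of open subsets of ℝ^n covers A and is a simple chain from x = h(0) to y = h(1). If p_1 ∈ V_i ∩ A is a point of A and A_{2,1} ⊆ A is a subarc of A from a point p_2 ∈ V_1 ∩ A to a point p_3 ∈ V_l ∩ A not containing any point of V_i, then A_{2,1} is disconnected by the open sets ⋃_{j<i} V_j and ⋃_{j>i} V_j — a contradiction; hence every subarc of A from a point of V_1 ∩ A to a point of V_l ∩ A meets every link V_i that contains a point of A. -/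
theorem subarc_meets_every_link {n : ℕ} {l : ℕ}
    (A : Set (EuclideanSpace ℝ (Fin n)))
    (x y : EuclideanSpace ℝ (Fin n))
    (hA : IsArcIn A x y)
    (V : Fin (l + 1) → Set (EuclideanSpace ℝ (Fin n)))
    (hopen : ∀ i, IsOpen (V i))
    (hsimple : ∀ i j : Fin (l + 1),
      (V i ∩ V j).Nonempty ↔ |(i : ℤ) - (j : ℤ)| ≤ 1)
    (hx : x ∈ V 0) (hx' : ∀ j : Fin (l + 1), j ≠ 0 → x ∉ V j)
    (hy : y ∈ V (Fin.last l)) (hy' : ∀ j : Fin (l + 1), j ≠ Fin.last l → y ∉ V j)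
    (hcover : A ⊆ ⋃ j, V j) :
    ∀ i : Fin (l + 1), (V i ∩ A).Nonempty →
      ∀ p₂ ∈ V 0 ∩ A, ∀ p₃ ∈ V (Fin.last l) ∩ A,
        ∀ B ⊆ A, IsArcIn B p₂ p₃ → (B ∩ V i).Nonempty := by
  intro i _hi p₂ hp₂ p₃ hp₃ B hB hBarc
  obtain ⟨f, hf, _hfi, hfim, hf0, hf1⟩ := hBarc
  have hp₂B : p₂ ∈ B := by
    rw [← hfim, ← hf0]
    exact Set.mem_image_of_mem f ⟨le_refl 0, zero_le_one⟩
  have hp₃B : p₃ ∈ B := by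
    rw [← hfim, ← hf1]
    exact Set.mem_image_of_mem f ⟨zero_le_one, le_refl 1⟩
  by_contra hcon
  rw [Set.not_nonempty_iff_eq_empty, Set.eq_empty_iff_forall_notMem] at hcon
  have hi0 : i ≠ 0 := by rintro rfl; exact hcon p₂ ⟨hp₂B, hp₂.1⟩
  have hil : i ≠ Fin.last l := by rintro rfl; exact hcon p₃ ⟨hp₃B, hp₃.1⟩
  set U := ⋃ j ∈ {j : Fin (l + 1) | j < i}, V j with hU_def
  set W := ⋃ j ∈ {j : Fin (l + 1) | i < j}, V j with hW_def
  have hBconn : IsPreconnected B := by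
    rw [← hfim]; exact isPreconnected_Icc.image f hf
  have hUo : IsOpen U := isOpen_biUnion fun j _ => hopen j
  have hWo : IsOpen W := isOpen_biUnion fun j _ => hopen j
  have hcov : B ⊆ U ∪ W := by
    intro b hb
    obtain ⟨j, hj⟩ := Set.mem_iUnion.mp (hcover (hB hb))
    rcases lt_trichotomy j i with h | h | h
    · exact Or.inl (Set.mem_biUnion h hj)
    · exact absurd ⟨hb, h ▸ hj⟩ (hcon b)
    · exact Or.inr (Set.mem_biUnion h hj)
  have hU : (B ∩ U).Nonempty :=
    ⟨p₂, hp₂B, Set.mem_biUnion (Fin.pos_of_ne_zero hi0) hp₂.1⟩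
  have hW : (B ∩ W).Nonempty :=
    ⟨p₃, hp₃B, Set.mem_biUnion (lt_of_le_of_ne (Fin.le_last i) hil) hp₃.1⟩
  obtain ⟨z, _hzB, hzU, hzW⟩ := hBconn U W hUo hWo hcov hU hW
  obtain ⟨j, hji, hzj⟩ := Set.mem_iUnion₂.mp hzU
  obtain ⟨k, hik, hzk⟩ := Set.mem_iUnion₂.mp hzW
  have hnear := abs_le.mp ((hsimple j k).mp ⟨z, hzj, hzk⟩)
  have h1 : (j : ℕ) < (i : ℕ) := hji
  have h2 : (i : ℕ) < (k : ℕ) := hik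
  omega
end
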